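/- arXiv:1710.07734 — 4 statements merged into one kernel-verified Lean document; each statement's English description precedes it below -/
import Mathlib

section
/- Let a < b be real numbers, k ∈ ℕ, and let τ_sp⁻, τ_sq⁻, τ_su⁻, τ_rp⁻, τ_rq⁻, τ_ru⁻, τ_pq⁺, τ_pu⁺, τ_sq⁺, τ_su⁺, τ_rq⁺, τ_ru⁺ be real numbers with Δ := θ_q^s θ_u^r − θ_u^s θ_q^r ≠ 0. Then for any continuous functions u, q, p, r, s : [a,b] → ℝ there exists a unique quintuple (Πu, Πq, Πp, Πr, Πs) of real polynomials of degree at most k such that, writing δ_ω := ω − Πω for ω ∈ {u,q,p,r,s}: (i) ∫_a^b δ_ω(x) v(x) dx = 0 for every polynomial v of degree at most k−1 and every ω ∈ {u,q,p,r,s}; (ii) at the right endpoint b: δ_s(b) − τ_su⁻ δ_u(b) − τ_sq⁻ δ_q(b) − τ_sp⁻ δ_p(b) = 0 and δ_r(b) − τ_ru⁻ δ_u(b) − τ_rq⁻ δ_q(b) − τ_rp⁻ δ_p(b) = 0; (iii) at the left endpoint a (where the outward normal is −1): δ_p(a) + τ_pu⁺ δ_u(a) + τ_pq⁺ δ_q(a)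 = 0, δ_s(a) + τ_su⁺ δ_u(a) + τ_sq⁺ δ_q(a) = 0, and δ_r(a) + τ_ru⁺ δ_u(a) + τ_rq⁺ δ_q(a) = 0. -/
open MeasureTheory intervalIntegral Polynomial Set

lemma aux_intg {a b : ℝ} (hab : a ≤ b) {f : ℝ → ℝ}
    (hf : ContinuousOn f (Set.Icc a b)) : IntervalIntegrable f volume a b :=
  (by rwa [Set.uIcc_of_le hab] : ContinuousOn f (Set.uIcc a b)).intervalIntegrable

lemma aux_polyzero {a b : ℝ} (hab : a < b) (P : Polynomial ℝ)
    (hnn : ∀ x ∈ Set.Icc a b, 0 ≤ P.eval x)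
    (hint : (∫ x in a..b, P.eval x) = 0) : P = 0 := by
  have hcont : Continuous fun x => P.eval x := P.continuous
  have hI : IntervalIntegrable (fun x => P.eval x) volume a b :=
    hcont.intervalIntegrable a b
  have hnn' : 0 ≤ᵐ[volume.restrict (Set.Ioc a b)] fun x => P.eval x := by
    refine MeasureTheory.ae_restrict_of_forall_mem measurableSet_Ioc ?_
    intro x hx
    exact hnn x ⟨le_of_lt hx.1, hx.2⟩
  have hz := (intervalIntegral.integral_eq_zero_iff_of_le_of_nonneg_ae hab.le hnn' hI).mp hint
  -- hz : (fun x => P.eval x) =ᵐ[volume.restrict (Ioc a b)] 0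
  have hroots : ∀ x ∈ Set.Ioo a b, P.eval x = 0 := by
    by_contra hcon
    push_neg at hcon
    obtain ⟨x0, hx0, hPx0⟩ := hcon
    set U : Set ℝ := Set.Ioo a b ∩ {x | P.eval x ≠ 0} with hU
    have hUopen : IsOpen U := isOpen_Ioo.inter (isOpen_compl_singleton.preimage hcont)
    have hUne : U.Nonempty := ⟨x0, hx0, hPx0⟩
    have hpos : 0 < volume U := hUopen.measure_pos volume hUne
    have hnull : volume.restrict (Set.Ioc a b) {x | P.eval x ≠ 0} = 0 := by
      have := hz
      rw [Filter.EventuallyEq, ae_iff] at this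
      simpa using this
    have : volume U = 0 := by
      have h1 : volume U = volume.restrict (Set.Ioc a b) U := by
        rw [Measure.restrict_apply' measurableSet_Ioc]
        have hsub : U ⊆ Set.Ioc a b := fun x hx => ⟨hx.1.1, hx.1.2.le⟩
        rw [Set.inter_eq_left.mpr hsub]
      rw [h1]
      exact measure_mono_null (fun x hx => hx.2) hnull
    exact absurd this hpos.ne'
  apply Polynomial.eq_zero_of_infinite_isRoot
  apply Set.Infinite.mono (s := Set.Ioo a b) _ (Set.Ioo_infinite hab)
  intro x hx
  exact hroots x hx

lemma aux_momentQ {a b : ℝ} (hab : a < b) (n : ℕ) (ω : ℝ → ℝ)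
    (hω : ContinuousOn ω (Set.Icc a b)) :
    ∃ Q : Polynomial ℝ, Q.degree < (n : ℕ) ∧
      ∀ v : Polynomial ℝ, v.degree < (n : ℕ) →
        (∫ x in a..b, (ω x - Q.eval x) * v.eval x) = 0 := by
  classical
  -- the moment matrix
  set M : Matrix (Fin n) (Fin n) ℝ :=
    fun j i => ∫ x in a..b, x ^ ((i : ℕ) + (j : ℕ)) with hM
  -- key computation: integral of a coefficient-sum polynomial against x^j
  have key : ∀ (c : Fin n → ℝ) (j : Fin n),
      (∫ x in a..b, (∑ i : Fin n, Polynomial.C (c i) * Polynomial.X ^ (i : ℕ)).eval x * x ^ (j : ℕ))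
        = M.mulVec c j := by
    intro c j
    have h1 : ∀ x : ℝ,
        (∑ i : Fin n, Polynomial.C (c i) * Polynomial.X ^ (i : ℕ)).eval x * x ^ (j : ℕ)
          = ∑ i : Fin n, c i * x ^ ((i : ℕ) + (j : ℕ)) := by
      intro x
      rw [Polynomial.eval_finset_sum, Finset.sum_mul]
      congr 1; ext i
      simp [pow_add]; ring
    rw [intervalIntegral.integral_congr (g := fun x => ∑ i : Fin n, c i * x ^ ((i:ℕ)+(j:ℕ)))
      (fun x _ => h1 x)]
    rw [intervalIntegral.integral_finset_sum]
    · simp only [Matrix.mulVec, dotProduct, hM]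
      congr 1; ext i
      rw [intervalIntegral.integral_const_mul]
      ring
    · intro i _
      exact (continuous_const.mul (continuous_pow _)).intervalIntegrable a b
  -- injectivity of the moment map
  have hinj : Function.Injective (Matrix.toLin' M) := by
    rw [← LinearMap.ker_eq_bot, LinearMap.ker_eq_bot']
    intro c hc
    have hc' : ∀ j : Fin n, M.mulVec c j = 0 := by
      intro j
      have := congrFun hc j
      simpa [Matrix.toLin'_apply] using this
    set F : Polynomial ℝ := ∑ i : Fin n, Polynomial.C (c i) * Polynomial.X ^ (i : ℕ) with hF
    have hFj : ∀ j : Fin n, (∫ x in a..b, F.eval x * x ^ (j : ℕ)) = 0 := by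
      intro j; rw [hF, key]; exact hc' j
    have hFF : (∫ x in a..b, (F * F).eval x) = 0 := by
      have h2 : ∀ x : ℝ, (F * F).eval x = ∑ j : Fin n, c j * (F.eval x * x ^ (j : ℕ)) := by
        intro x
        conv_lhs => rw [Polynomial.eval_mul]
        conv_lhs => rw [show F.eval x * F.eval x = F.eval x * F.eval x from rfl]
        nth_rewrite 2 [hF]
        rw [Polynomial.eval_finset_sum, Finset.mul_sum]
        congr 1; ext j
        simp; ring
      rw [intervalIntegral.integral_congr (g := fun x => ∑ j : Fin n, c j * (F.eval x * x ^ (j:ℕ)))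
        (fun x _ => h2 x)]
      rw [intervalIntegral.integral_finset_sum]
      · simp only [intervalIntegral.integral_const_mul]
        apply Finset.sum_eq_zero
        intro j _
        rw [hFj j]; ring
      · intro j _
        exact (continuous_const.mul (F.continuous.mul (continuous_pow _))).intervalIntegrable a b
    have hF0 : F = 0 := by
      have := aux_polyzero hab (F * F) (fun x _ => by
        rw [Polynomial.eval_mul]; exact mul_self_nonneg _) hFF
      exact mul_self_eq_zero.mp this
    funext i
    have : F.coeff (i : ℕ) = c i := by
      rw [hF, Polynomial.finset_sum_coeff]
      rw [Finset.sum_eq_single i]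
      · simp
      · intro i' _ hne
        simp [Polynomial.coeff_C_mul, Polynomial.coeff_X_pow]
        intro h
        exact absurd (Fin.ext h) (Ne.symm hne)
      · intro h; exact absurd (Finset.mem_univ i) h
    rw [← this, hF0]
    simp
  have hsurj := (LinearMap.injective_iff_surjective).mp hinj
  obtain ⟨c, hc⟩ := hsurj (fun j => ∫ x in a..b, ω x * x ^ (j : ℕ))
  set Q : Polynomial ℝ := ∑ i : Fin n, Polynomial.C (c i) * Polynomial.X ^ (i : ℕ) with hQ
  have hQco : ∀ m : ℕ, (n : ℕ) ≤ m → Q.coeff m = 0 := by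
    intro m hm
    rw [hQ, Polynomial.finset_sum_coeff]
    apply Finset.sum_eq_zero
    intro i _
    simp [Polynomial.coeff_C_mul, Polynomial.coeff_X_pow]
    intro h
    have := i.isLt
    omega
  refine ⟨Q, (Polynomial.degree_lt_iff_coeff_zero Q n).mpr (fun m hm => hQco m (by exact_mod_cast hm)), ?_⟩
  -- moment conditions against monomials
  have hmono : ∀ j : Fin n, (∫ x in a..b, (ω x - Q.eval x) * x ^ (j : ℕ)) = 0 := by
    intro j
    have hio : IntervalIntegrable (fun x => ω x * x ^ (j:ℕ)) volume a b :=
      aux_intg hab.le (hω.mul (continuous_pow _).continuousOn)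
    have hiq : IntervalIntegrable (fun x => Q.eval x * x ^ (j:ℕ)) volume a b :=
      (Q.continuous.mul (continuous_pow _)).intervalIntegrable a b
    have hsplit : (∫ x in a..b, (ω x - Q.eval x) * x ^ (j:ℕ))
        = (∫ x in a..b, ω x * x ^ (j:ℕ)) - (∫ x in a..b, Q.eval x * x ^ (j:ℕ)) := by
      rw [← intervalIntegral.integral_sub hio hiq]
      congr 1; ext x; ring
    rw [hsplit]
    have h2 : (∫ x in a..b, Q.eval x * x ^ (j:ℕ)) = ∫ x in a..b, ω x * x ^ (j:ℕ) := by
      rw [hQ, key c j]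
      have := congrFun hc j
      rw [Matrix.toLin'_apply] at this
      exact this
    rw [h2]; ring
  intro v hv
  by_cases hv0 : v = 0
  · simp [hv0]
  have hvn : v.natDegree < n := (Polynomial.natDegree_lt_iff_degree_lt hv0).mpr hv
  have hev : ∀ x : ℝ, (ω x - Q.eval x) * v.eval x
      = ∑ j ∈ Finset.range n, v.coeff j * ((ω x - Q.eval x) * x ^ j) := by
    intro x
    rw [Polynomial.eval_eq_sum_range' hvn, Finset.mul_sum]
    congr 1; ext j; ring
  rw [intervalIntegral.integral_congr (g := fun x => ∑ j ∈ Finset.range n,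
      v.coeff j * ((ω x - Q.eval x) * x ^ j)) (fun x _ => hev x)]
  rw [intervalIntegral.integral_finset_sum]
  · apply Finset.sum_eq_zero
    intro j hj
    rw [intervalIntegral.integral_const_mul]
    have := hmono ⟨j, Finset.mem_range.mp hj⟩
    simp only at this
    rw [this]; ring
  · intro j _
    apply IntervalIntegrable.const_mul
    exact aux_intg hab.le ((hω.sub Q.continuous.continuousOn).mul (continuous_pow _).continuousOn)

lemma aux_orthchar {a b : ℝ} (hab : a < b) (n : ℕ) (φ ψ : Polynomial ℝ)
    (hφd : φ.degree ≤ (n : ℕ)) (hφk : φ.coeff n = 1)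
    (hφo : ∀ v : Polynomial ℝ, v.degree < (n : ℕ) →
      (∫ x in a..b, φ.eval x * v.eval x) = 0)
    (hψd : ψ.degree ≤ (n : ℕ))
    (hψo : ∀ v : Polynomial ℝ, v.degree < (n : ℕ) →
      (∫ x in a..b, ψ.eval x * v.eval x) = 0) :
    ψ = Polynomial.C (ψ.coeff n) * φ := by
  set χ : Polynomial ℝ := ψ - Polynomial.C (ψ.coeff n) * φ with hχ
  have hχd : χ.degree < (n : ℕ) := by
    rw [Polynomial.degree_lt_iff_coeff_zero]
    intro m hm
    have hm' : n ≤ m := by exact_mod_cast hm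
    rw [hχ, Polynomial.coeff_sub, Polynomial.coeff_C_mul]
    rcases eq_or_lt_of_le hm' with h | h
    · rw [← h, hφk]; ring
    · have h1 : ψ.coeff m = 0 := Polynomial.coeff_eq_zero_of_degree_lt
        (lt_of_le_of_lt hψd (by exact_mod_cast h))
      have h2 : φ.coeff m = 0 := Polynomial.coeff_eq_zero_of_degree_lt
        (lt_of_le_of_lt hφd (by exact_mod_cast h))
      rw [h1, h2]; ring
  have hχo : ∀ v : Polynomial ℝ, v.degree < (n : ℕ) →
      (∫ x in a..b, χ.eval x * v.eval x) = 0 := by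
    intro v hv
    have h1 : ∀ x : ℝ, χ.eval x * v.eval x
        = ψ.eval x * v.eval x - ψ.coeff n * (φ.eval x * v.eval x) := by
      intro x; rw [hχ]; simp; ring
    rw [intervalIntegral.integral_congr (g := fun x =>
      ψ.eval x * v.eval x - ψ.coeff n * (φ.eval x * v.eval x)) (fun x _ => h1 x)]
    rw [intervalIntegral.integral_sub (f := fun x => ψ.eval x * v.eval x)
      (g := fun x => ψ.coeff n * (φ.eval x * v.eval x)) ((ψ.continuous.mul v.continuous).intervalIntegrable a b)
      (((continuous_const.mul (φ.continuous.mul v.continuous))).intervalIntegrable a b)]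
    rw [intervalIntegral.integral_const_mul, hψo v hv, hφo v hv]
    ring
  have hχχ : (∫ x in a..b, (χ * χ).eval x) = 0 := by
    have h1 : ∀ x : ℝ, (χ * χ).eval x = χ.eval x * χ.eval x := fun x => by simp
    rw [intervalIntegral.integral_congr (g := fun x => χ.eval x * χ.eval x) (fun x _ => h1 x)]
    exact hχo χ hχd
  have hχ0 : χ = 0 := mul_self_eq_zero.mp
    (aux_polyzero hab (χ * χ) (fun x _ => by rw [Polynomial.eval_mul]; exact mul_self_nonneg _) hχχ)
  exact sub_eq_zero.mp (hχ ▸ hχ0)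

lemma aux_phine {a b : ℝ} (hab : a < b) (n : ℕ) (φ : Polynomial ℝ)
    (hφd : φ.degree ≤ (n : ℕ)) (hφk : φ.coeff n = 1)
    (hφo : ∀ v : Polynomial ℝ, v.degree < (n : ℕ) →
      (∫ x in a..b, φ.eval x * v.eval x) = 0)
    (c ε : ℝ) (hε : ε ≠ 0)
    (hsign : ∀ x ∈ Set.Icc a b, 0 ≤ ε * (x - c)) :
    φ.eval c ≠ 0 := by
  intro hroot
  have hφ0 : φ ≠ 0 := fun h => by simp [h] at hφk
  obtain ⟨ψ, hψ⟩ := (Polynomial.dvd_iff_isRoot.mpr hroot)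
  have hψ0 : ψ ≠ 0 := by
    intro h; rw [h, mul_zero] at hψ; exact hφ0 hψ
  have hψd : ψ.degree < (n : ℕ) := by
    have hdm : φ.degree = 1 + ψ.degree := by
      rw [hψ, Polynomial.degree_mul, Polynomial.degree_X_sub_C]
    rw [Polynomial.degree_eq_natDegree hψ0] at hdm ⊢
    have h1 := hdm ▸ hφd
    have h2 : 1 + ψ.natDegree ≤ n := by exact_mod_cast h1
    have h3 : ψ.natDegree < n := by omega
    exact_mod_cast h3
  have hint : (∫ x in a..b, φ.eval x * ψ.eval x) = 0 := hφo ψ hψd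
  set P : Polynomial ℝ := Polynomial.C ε * ((Polynomial.X - Polynomial.C c) * ψ ^ 2) with hP
  have hPnn : ∀ x ∈ Set.Icc a b, 0 ≤ P.eval x := by
    intro x hx
    rw [hP]
    simp only [Polynomial.eval_mul, Polynomial.eval_C, Polynomial.eval_sub, Polynomial.eval_X,
      Polynomial.eval_pow]
    have := hsign x hx
    nlinarith [sq_nonneg (ψ.eval x)]
  have hPint : (∫ x in a..b, P.eval x) = 0 := by
    have h1 : ∀ x : ℝ, P.eval x = ε * (φ.eval x * ψ.eval x) := by
      intro x
      rw [hP, hψ]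
      simp only [Polynomial.eval_mul, Polynomial.eval_C, Polynomial.eval_sub, Polynomial.eval_X,
        Polynomial.eval_pow]
      ring
    rw [intervalIntegral.integral_congr (g := fun x => ε * (φ.eval x * ψ.eval x))
      (fun x _ => h1 x)]
    rw [intervalIntegral.integral_const_mul, hint, mul_zero]
  have hP0 := aux_polyzero hab P hPnn hPint
  rw [hP] at hP0
  rcases mul_eq_zero.mp hP0 with h | h
  · exact hε (by simpa using h)
  rcases mul_eq_zero.mp h with h' | h'
  · exact Polynomial.X_sub_C_ne_zero c h'
  · exact hψ0 (pow_eq_zero_iff (by norm_num) |>.mp h')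

lemma aux_uniquec (tspm tsqm tsum trpm trqm trum tpqp tpup tsqp tsup trqp trup : ℝ)
    (hΔ : (tsqm + tsqp - tspm * tpqp) * (trum + trup - trpm * tpup)
        - (tsum + tsup - tspm * tpup) * (trqm + trqp - trpm * tpqp) ≠ 0)
    (A B : ℝ) (hA : A ≠ 0) (hB : B ≠ 0)
    (cu cq cp cr cs : ℝ)
    (e1 : cs * B - tsum * (cu * B) - tsqm * (cq * B) - tspm * (cp * B) = 0)
    (e2 : cr * B - trum * (cu * B) - trqm * (cq * B) - trpm * (cp * B) = 0)
    (e3 : cp * A + tpup * (cu * A) + tpqp * (cq * A) = 0)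
    (e4 : cs * A + tsup * (cu * A) + tsqp * (cq * A) = 0)
    (e5 : cr * A + trup * (cu * A) + trqp * (cq * A) = 0) :
    cu = 0 ∧ cq = 0 ∧ cp = 0 ∧ cr = 0 ∧ cs = 0 := by
  have div : ∀ x : ℝ, x * B = 0 → x = 0 := fun x h =>
    (mul_eq_zero.mp h).resolve_right hB
  have divA : ∀ x : ℝ, x * A = 0 → x = 0 := fun x h =>
    (mul_eq_zero.mp h).resolve_right hA
  have f1 : cs - tsum * cu - tsqm * cq - tspm * cp = 0 := by
    apply div; linear_combination e1
  have f2 : cr - trum * cu - trqm * cq - trpm * cp = 0 := by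
    apply div; linear_combination e2
  have f3 : cp + tpup * cu + tpqp * cq = 0 := by
    apply divA; linear_combination e3
  have f4 : cs + tsup * cu + tsqp * cq = 0 := by
    apply divA; linear_combination e4
  have f5 : cr + trup * cu + trqp * cq = 0 := by
    apply divA; linear_combination e5
  have E1 : (tsum + tsup - tspm * tpup) * cu + (tsqm + tsqp - tspm * tpqp) * cq = 0 := by
    linear_combination f4 - f1 - tspm * f3
  have E2 : (trum + trup - trpm * tpup) * cu + (trqm + trqp - trpm * tpqp) * cq = 0 := by
    linear_combination f5 - f2 - trpm * f3
  have hcu : cu = 0 := by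
    have h : ((tsqm + tsqp - tspm * tpqp) * (trum + trup - trpm * tpup)
        - (tsum + tsup - tspm * tpup) * (trqm + trqp - trpm * tpqp)) * cu = 0 := by
      linear_combination (tsqm + tsqp - tspm * tpqp) * E2 - (trqm + trqp - trpm * tpqp) * E1
    exact (mul_eq_zero.mp h).resolve_left hΔ
  have hcq : cq = 0 := by
    have h : ((tsqm + tsqp - tspm * tpqp) * (trum + trup - trpm * tpup)
        - (tsum + tsup - tspm * tpup) * (trqm + trqp - trpm * tpqp)) * cq = 0 := by
      linear_combination (trum + trup - trpm * tpup) * E1 - (tsum + tsup - tspm * tpup) * E2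
    exact (mul_eq_zero.mp h).resolve_left hΔ
  refine ⟨hcu, hcq, ?_, ?_, ?_⟩ <;> [skip; skip; skip]
  · linear_combination f3 - tpup * hcu - tpqp * hcq
  · linear_combination f5 - trup * hcu - trqp * hcq
  · linear_combination f4 - tsup * hcu - tsqp * hcq

lemma aux_existsc (tspm tsqm tsum trpm trqm trum tpqp tpup tsqp tsup trqp trup : ℝ)
    (hΔ : (tsqm + tsqp - tspm * tpqp) * (trum + trup - trpm * tpup)
        - (tsum + tsup - tspm * tpup) * (trqm + trqp - trpm * tpqp) ≠ 0)
    (A B : ℝ) (hA : A ≠ 0) (hB : B ≠ 0)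
    (Eua Eqa Epa Era Esa Eub Eqb Epb Erb Esb : ℝ) :
    ∃ cu cq cp cr cs : ℝ,
      ((Esb - cs * B) - tsum * (Eub - cu * B) - tsqm * (Eqb - cq * B)
        - tspm * (Epb - cp * B) = 0) ∧
      ((Erb - cr * B) - trum * (Eub - cu * B) - trqm * (Eqb - cq * B)
        - trpm * (Epb - cp * B) = 0) ∧
      ((Epa - cp * A) + tpup * (Eua - cu * A) + tpqp * (Eqa - cq * A) = 0) ∧
      ((Esa - cs * A) + tsup * (Eua - cu * A) + tsqp * (Eqa - cq * A) = 0) ∧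
      ((Era - cr * A) + trup * (Eua - cu * A) + trqp * (Eqa - cq * A) = 0) := by
  set αs := tsum + tsup - tspm * tpup with hαs
  set βs := tsqm + tsqp - tspm * tpqp with hβs
  set αr := trum + trup - trpm * tpup with hαr
  set βr := trqm + trqp - trpm * tpqp with hβr
  set D := αs * βr - αr * βs with hD
  have hDne : D ≠ 0 := by
    rw [hD]; intro h; exact hΔ (by linarith)
  set d1 := Esb - tsum * Eub - tsqm * Eqb - tspm * Epb with hd1
  set d2 := Erb - trum * Eub - trqm * Eqb - trpm * Epb with hd2
  set d3 := Epa + tpup * Eua + tpqp * Eqa with hd3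
  set d4 := Esa + tsup * Eua + tsqp * Eqa with hd4
  set d5 := Era + trup * Eua + trqp * Eqa with hd5
  set g1 := -d1 / B + (d4 - tspm * d3) / A with hg1
  set g2 := -d2 / B + (d5 - trpm * d3) / A with hg2
  set cu := (g1 * βr - g2 * βs) / D with hcu
  set cq := (αs * g2 - αr * g1) / D with hcq
  set cp := d3 / A - tpup * cu - tpqp * cq with hcp
  set cs := d4 / A - tsup * cu - tsqp * cq with hcs
  set cr := d5 / A - trup * cu - trqp * cq with hcr
  have key1 : αs * cu + βs * cq = g1 := by
    rw [hcu, hcq]; field_simp; ring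
  have key2 : αr * cu + βr * cq = g2 := by
    rw [hcu, hcq]; field_simp; ring
  refine ⟨cu, cq, cp, cr, cs, ?_, ?_, ?_, ?_, ?_⟩
  · -- s at b
    have : cs - tsum * cu - tsqm * cq - tspm * cp = d1 / B := by
      rw [hcs, hcp]
      have expand : d4 / A - tsup * cu - tsqp * cq - tsum * cu - tsqm * cq
          - tspm * (d3 / A - tpup * cu - tpqp * cq)
          = (d4 - tspm * d3) / A - (αs * cu + βs * cq) := by
        rw [hαs, hβs]; field_simp; ring
      rw [expand, key1, hg1]; ring
    have h2 : (Esb - cs * B) - tsum * (Eub - cu * B) - tsqm * (Eqb - cq * B)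
        - tspm * (Epb - cp * B) = d1 - (cs - tsum * cu - tsqm * cq - tspm * cp) * B := by
      rw [hd1]; ring
    rw [h2, this]; field_simp; ring
  · -- r at b
    have : cr - trum * cu - trqm * cq - trpm * cp = d2 / B := by
      rw [hcr, hcp]
      have expand : d5 / A - trup * cu - trqp * cq - trum * cu - trqm * cq
          - trpm * (d3 / A - tpup * cu - tpqp * cq)
          = (d5 - trpm * d3) / A - (αr * cu + βr * cq) := by
        rw [hαr, hβr]; field_simp; ring
      rw [expand, key2, hg2]; ring
    have h2 : (Erb - cr * B) - trum * (Eub - cu * B) - trqm * (Eqb - cq * B)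
        - trpm * (Epb - cp * B) = d2 - (cr - trum * cu - trqm * cq - trpm * cp) * B := by
      rw [hd2]; ring
    rw [h2, this]; field_simp; ring
  · -- p at a
    have h2 : (Epa - cp * A) + tpup * (Eua - cu * A) + tpqp * (Eqa - cq * A)
        = d3 - (cp + tpup * cu + tpqp * cq) * A := by
      rw [hd3]; ring
    rw [h2, hcp]; field_simp; ring
  · -- s at a
    have h2 : (Esa - cs * A) + tsup * (Eua - cu * A) + tsqp * (Eqa - cq * A)
        = d4 - (cs + tsup * cu + tsqp * cq) * A := by
      rw [hd4]; ring
    rw [h2, hcs]; field_simp; ring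
  · -- r at a
    have h2 : (Era - cr * A) + trup * (Eua - cu * A) + trqp * (Eqa - cq * A)
        = d5 - (cr + trup * cu + trqp * cq) * A := by
      rw [hd5]; ring
    rw [h2, hcr]; field_simp; ring

theorem stmt_2 (a b : ℝ) (hab : a < b) (k : ℕ)
    (tspm tsqm tsum trpm trqm trum tpqp tpup tsqp tsup trqp trup : ℝ)
    (hΔ : (tsqm + tsqp - tspm * tpqp) * (trum + trup - trpm * tpup)
        - (tsum + tsup - tspm * tpup) * (trqm + trqp - trpm * tpqp) ≠ 0)
    (u q p r s : ℝ → ℝ)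
    (hu : ContinuousOn u (Set.Icc a b)) (hq : ContinuousOn q (Set.Icc a b))
    (hp : ContinuousOn p (Set.Icc a b)) (hr : ContinuousOn r (Set.Icc a b))
    (hs : ContinuousOn s (Set.Icc a b)) :
    ∃! P : Polynomial ℝ × Polynomial ℝ × Polynomial ℝ × Polynomial ℝ × Polynomial ℝ,
      P.1.degree ≤ (k : ℕ) ∧ P.2.1.degree ≤ (k : ℕ) ∧ P.2.2.1.degree ≤ (k : ℕ) ∧
      P.2.2.2.1.degree ≤ (k : ℕ) ∧ P.2.2.2.2.degree ≤ (k : ℕ) ∧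
      (∀ v : Polynomial ℝ, v.degree < (k : ℕ) →
        (∫ x in a..b, (u x - P.1.eval x) * v.eval x) = 0 ∧
        (∫ x in a..b, (q x - P.2.1.eval x) * v.eval x) = 0 ∧
        (∫ x in a..b, (p x - P.2.2.1.eval x) * v.eval x) = 0 ∧
        (∫ x in a..b, (r x - P.2.2.2.1.eval x) * v.eval x) = 0 ∧
        (∫ x in a..b, (s x - P.2.2.2.2.eval x) * v.eval x) = 0) ∧
      ((s b - P.2.2.2.2.eval b) - tsum * (u b - P.1.eval b)
        - tsqm * (q b - P.2.1.eval b) - tspm * (p b - P.2.2.1.eval b) = 0) ∧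
      ((r b - P.2.2.2.1.eval b) - trum * (u b - P.1.eval b)
        - trqm * (q b - P.2.1.eval b) - trpm * (p b - P.2.2.1.eval b) = 0) ∧
      ((p a - P.2.2.1.eval a) + tpup * (u a - P.1.eval a)
        + tpqp * (q a - P.2.1.eval a) = 0) ∧
      ((s a - P.2.2.2.2.eval a) + tsup * (u a - P.1.eval a)
        + tsqp * (q a - P.2.1.eval a) = 0) ∧
      ((r a - P.2.2.2.1.eval a) + trup * (u a - P.1.eval a)
        + trqp * (q a - P.2.1.eval a) = 0) := by
  obtain ⟨Qu, hQud, hQu⟩ := aux_momentQ hab k u hu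
  obtain ⟨Qq, hQqd, hQq⟩ := aux_momentQ hab k q hq
  obtain ⟨Qp, hQpd, hQp⟩ := aux_momentQ hab k p hp
  obtain ⟨Qr, hQrd, hQr⟩ := aux_momentQ hab k r hr
  obtain ⟨Qs, hQsd, hQs⟩ := aux_momentQ hab k s hs
  obtain ⟨Q0, hQ0d, hQ0⟩ := aux_momentQ hab k (fun x => x ^ k) (continuous_pow k).continuousOn
  set φ : Polynomial ℝ := Polynomial.X ^ k - Q0 with hφdef
  have hφd : φ.degree ≤ (k : ℕ) := by
    rw [hφdef]
    refine le_trans (Polynomial.degree_sub_le _ _) ?_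
    rw [max_le_iff]
    exact ⟨le_of_eq (Polynomial.degree_X_pow k), le_of_lt hQ0d⟩
  have hφk : φ.coeff k = 1 := by
    rw [hφdef, Polynomial.coeff_sub, Polynomial.coeff_X_pow,
      Polynomial.coeff_eq_zero_of_degree_lt hQ0d]
    simp
  have hφo : ∀ v : Polynomial ℝ, v.degree < (k : ℕ) →
      (∫ x in a..b, φ.eval x * v.eval x) = 0 := by
    intro v hv
    have h1 : ∀ x ∈ Set.uIcc a b, φ.eval x * v.eval x = (x ^ k - Q0.eval x) * v.eval x := by
      intro x _; rw [hφdef]; simp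
    rw [intervalIntegral.integral_congr h1]
    exact hQ0 v hv
  have hA : φ.eval a ≠ 0 :=
    aux_phine hab k φ hφd hφk hφo a 1 one_ne_zero (fun x hx => by nlinarith [hx.1])
  have hB : φ.eval b ≠ 0 :=
    aux_phine hab k φ hφd hφk hφo b (-1) (by norm_num) (fun x hx => by nlinarith [hx.2])
  obtain ⟨cu, cq, cp, cr, cs, h1, h2, h3, h4, h5⟩ :=
    aux_existsc tspm tsqm tsum trpm trqm trum tpqp tpup tsqp tsup trqp trup hΔ
      (φ.eval a) (φ.eval b) hA hB
      (u a - Qu.eval a) (q a - Qq.eval a) (p a - Qp.eval a) (r a - Qr.eval a) (s a - Qs.eval a)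
      (u b - Qu.eval b) (q b - Qq.eval b) (p b - Qp.eval b) (r b - Qr.eval b) (s b - Qs.eval b)
  have heval : ∀ (Q : Polynomial ℝ) (c x : ℝ),
      (Q + Polynomial.C c * φ).eval x = Q.eval x + c * φ.eval x := by
    intro Q c x; simp
  set Pu := Qu + Polynomial.C cu * φ with hPudef
  set Pq := Qq + Polynomial.C cq * φ with hPqdef
  set Pp := Qp + Polynomial.C cp * φ with hPpdef
  set Pr := Qr + Polynomial.C cr * φ with hPrdef
  set Ps := Qs + Polynomial.C cs * φ with hPsdef
  have hdeg : ∀ (c : ℝ) (Q : Polynomial ℝ), Q.degree < (k : ℕ) →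
      (Q + Polynomial.C c * φ).degree ≤ (k : ℕ) := by
    intro c Q hQ
    refine le_trans (Polynomial.degree_add_le _ _) ?_
    rw [max_le_iff]
    refine ⟨le_of_lt hQ, ?_⟩
    rw [← Polynomial.smul_eq_C_mul]
    exact le_trans (Polynomial.degree_smul_le _ _) hφd
  have horth : ∀ (c : ℝ) (Q : Polynomial ℝ) (ω : ℝ → ℝ), ContinuousOn ω (Set.Icc a b) →
      (∀ v : Polynomial ℝ, v.degree < (k : ℕ) →
        (∫ x in a..b, (ω x - Q.eval x) * v.eval x) = 0) →
      ∀ v : Polynomial ℝ, v.degree < (k : ℕ) →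
        (∫ x in a..b, (ω x - (Q + Polynomial.C c * φ).eval x) * v.eval x) = 0 := by
    intro c Q ω hω hQ v hv
    have hpt : ∀ x ∈ Set.uIcc a b, (ω x - (Q + Polynomial.C c * φ).eval x) * v.eval x
        = (ω x - Q.eval x) * v.eval x - c * (φ.eval x * v.eval x) := by
      intro x _; rw [heval]; ring
    rw [intervalIntegral.integral_congr hpt]
    rw [intervalIntegral.integral_sub (f := fun x => (ω x - Q.eval x) * v.eval x)
      (g := fun x => c * (φ.eval x * v.eval x))
      (aux_intg hab.le ((hω.sub Q.continuous.continuousOn).mul v.continuous.continuousOn))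
      ((continuous_const.mul (φ.continuous.mul v.continuous)).intervalIntegrable a b)]
    rw [intervalIntegral.integral_const_mul, hQ v hv, hφo v hv]
    ring
  -- boundary conditions for the witness
  have hb1 : (s b - Ps.eval b) - tsum * (u b - Pu.eval b) - tsqm * (q b - Pq.eval b)
      - tspm * (p b - Pp.eval b) = 0 := by
    rw [hPsdef, hPudef, hPqdef, hPpdef]; simp only [heval]; linear_combination h1
  have hb2 : (r b - Pr.eval b) - trum * (u b - Pu.eval b) - trqm * (q b - Pq.eval b)
      - trpm * (p b - Pp.eval b) = 0 := by
    rw [hPrdef, hPudef, hPqdef, hPpdef]; simp only [heval]; linear_combination h2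
  have hb3 : (p a - Pp.eval a) + tpup * (u a - Pu.eval a) + tpqp * (q a - Pq.eval a) = 0 := by
    rw [hPpdef, hPudef, hPqdef]; simp only [heval]; linear_combination h3
  have hb4 : (s a - Ps.eval a) + tsup * (u a - Pu.eval a) + tsqp * (q a - Pq.eval a) = 0 := by
    rw [hPsdef, hPudef, hPqdef]; simp only [heval]; linear_combination h4
  have hb5 : (r a - Pr.eval a) + trup * (u a - Pu.eval a) + trqp * (q a - Pq.eval a) = 0 := by
    rw [hPrdef, hPudef, hPqdef]; simp only [heval]; linear_combination h5
  refine ⟨(Pu, Pq, Pp, Pr, Ps), ⟨hdeg cu Qu hQud, hdeg cq Qq hQqd, hdeg cp Qp hQpd,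
    hdeg cr Qr hQrd, hdeg cs Qs hQsd,
    fun v hv => ⟨horth cu Qu u hu hQu v hv, horth cq Qq q hq hQq v hv,
      horth cp Qp p hp hQp v hv, horth cr Qr r hr hQr v hv, horth cs Qs s hs hQs v hv⟩,
    hb1, hb2, hb3, hb4, hb5⟩, ?_⟩
  rintro ⟨yu, yq, yp, yr, ys⟩
    ⟨hyud, hyqd, hypd, hyrd, hysd, hyorth, hy1, hy2, hy3, hy4, hy5⟩
  dsimp only at hyud hyqd hypd hyrd hysd hyorth hy1 hy2 hy3 hy4 hy5 ⊢
  -- characterize the differences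
  have hkey : ∀ (y : Polynomial ℝ) (c : ℝ) (Q : Polynomial ℝ) (ω : ℝ → ℝ),
      ContinuousOn ω (Set.Icc a b) → y.degree ≤ (k : ℕ) → Q.degree < (k : ℕ) →
      (∀ v : Polynomial ℝ, v.degree < (k : ℕ) →
        (∫ x in a..b, (ω x - y.eval x) * v.eval x) = 0) →
      (∀ v : Polynomial ℝ, v.degree < (k : ℕ) →
        (∫ x in a..b, (ω x - Q.eval x) * v.eval x) = 0) →
      ∃ c' : ℝ, y - (Q + Polynomial.C c * φ) = Polynomial.C c' * φ := by
    intro y c Q ω hω hyd hQd hyo hQo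
    set ψ := y - (Q + Polynomial.C c * φ) with hψdef
    have hψd : ψ.degree ≤ (k : ℕ) := by
      rw [hψdef]
      refine le_trans (Polynomial.degree_sub_le _ _) ?_
      rw [max_le_iff]
      exact ⟨hyd, hdeg c Q hQd⟩
    have hψo : ∀ v : Polynomial ℝ, v.degree < (k : ℕ) →
        (∫ x in a..b, ψ.eval x * v.eval x) = 0 := by
      intro v hv
      have hpt : ∀ x ∈ Set.uIcc a b, ψ.eval x * v.eval x
          = (ω x - (Q + Polynomial.C c * φ).eval x) * v.eval x
            - (ω x - y.eval x) * v.eval x := by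
        intro x _; rw [hψdef]; simp; ring
      rw [intervalIntegral.integral_congr hpt]
      rw [intervalIntegral.integral_sub (f := fun x => (ω x - (Q + Polynomial.C c * φ).eval x) * v.eval x)
        (g := fun x => (ω x - y.eval x) * v.eval x)
        (aux_intg hab.le ((hω.sub (Q + Polynomial.C c * φ).continuous.continuousOn).mul
          v.continuous.continuousOn))
        (aux_intg hab.le ((hω.sub y.continuous.continuousOn).mul v.continuous.continuousOn))]
      rw [horth c Q ω hω hQo v hv, hyo v hv]
      ring
    exact ⟨ψ.coeff k, aux_orthchar hab k φ ψ hφd hφk hφo hψd hψo⟩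
  obtain ⟨eu, heu⟩ := hkey yu cu Qu u hu hyud hQud (fun v hv => (hyorth v hv).1) hQu
  obtain ⟨eq', heq⟩ := hkey yq cq Qq q hq hyqd hQqd (fun v hv => (hyorth v hv).2.1) hQq
  obtain ⟨ep, hep⟩ := hkey yp cp Qp p hp hypd hQpd (fun v hv => (hyorth v hv).2.2.1) hQp
  obtain ⟨er, her⟩ := hkey yr cr Qr r hr hyrd hQrd (fun v hv => (hyorth v hv).2.2.2.1) hQr
  obtain ⟨es, hes⟩ := hkey ys cs Qs s hs hysd hQsd (fun v hv => (hyorth v hv).2.2.2.2) hQs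
  have hev : ∀ (y P : Polynomial ℝ) (c' : ℝ), y - P = Polynomial.C c' * φ →
      ∀ x : ℝ, y.eval x - P.eval x = c' * φ.eval x := by
    intro y P c' h x
    have := congrArg (Polynomial.eval x) h
    simpa using this
  have hua := hev yu Pu eu heu
  have hqa := hev yq Pq eq' heq
  have hpa := hev yp Pp ep hep
  have hra := hev yr Pr er her
  have hsa := hev ys Ps es hes
  obtain ⟨hu0, hq0, hp0, hr0, hs0⟩ :=
    aux_uniquec tspm tsqm tsum trpm trqm trum tpqp tpup tsqp tsup trqp trup hΔ
      (φ.eval a) (φ.eval b) hA hB eu eq' ep er es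
      (by linear_combination hb1 - hy1 - hsa b + tsum * hua b + tsqm * hqa b + tspm * hpa b)
      (by linear_combination hb2 - hy2 - hra b + trum * hua b + trqm * hqa b + trpm * hpa b)
      (by linear_combination hb3 - hy3 - hpa a - tpup * hua a - tpqp * hqa a)
      (by linear_combination hb4 - hy4 - hsa a - tsup * hua a - tsqp * hqa a)
      (by linear_combination hb5 - hy5 - hra a - trup * hua a - trqp * hqa a)
  have fin : ∀ (y P : Polynomial ℝ) (c' : ℝ), y - P = Polynomial.C c' * φ → c' = 0 → y = P := by
    intro y P c' h h0
    rw [h0] at h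
    simp at h
    exact sub_eq_zero.mp h
  simp only [Prod.mk.injEq]
  exact ⟨fin yu Pu eu heu hu0, fin yq Pq eq' heq hq0, fin yp Pp ep hep hp0,
    fin yr Pr er her hr0, fin ys Ps es hes hs0⟩
end

section
/- Let β ∈ ℝ with β ≠ 0 and let τ_su, τ_sq, τ_sp, τ_ru, τ_rq, τ_rp ∈ ℝ. For η = (η_u, η_q, η_p, η_ut, η_qt, η_pt) ∈ ℝ⁶ define T⁻(η) = (−β τ_su) η_u² + (β τ_rq) η_q² + (−β/2) η_p² + (−1/(2β) − β τ_su) η_ut² + (−1/(2β) + β τ_rq) η_qt² + (−β/2) η_pt² + (−τ_ru + τ_su τ_ru) η_u η_ut + (−τ_sq + τ_sq τ_rq) η_q η_qt + (τ_rp + τ_sp τ_rp) η_p η_pt + (−β τ_sq + β τ_ru) η_u η_q + (−β τ_sp) η_u η_p + (β τ_rp) η_p η_q + (1 − τ_rq + τ_sq τ_ru) η_q η_ut + (−τ_su + τ_su τ_rq) η_u η_qt + (1 − τ_sp + τ_sp τ_rq) η_p η_qt + (τ_rq + τ_sq τ_rp) η_q η_pt + (τ_ru + τ_su τ_rp) η_u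 η_pt + (−τ_rp + τ_sp τ_ru) η_p η_ut + (1/β − β τ_sp) η_ut η_pt + (−β τ_sq + β τ_ru) η_qt η_ut + (β τ_rp) η_qt η_pt. If β = −1, τ_su = 1, τ_rq = −1, and τ_sq = τ_sp = τ_ru = τ_rp = 0, then for every η ∈ ℝ⁶, T⁻(η) = (η_u − η_qt)² + (1/2)(η_p + η_qt)² + (1/2)(η_pt − η_q − η_ut)² + (1/2)(η_q + η_ut)² + (1/2) η_ut² , and in particular T⁻(η) ≥ 0. -/
/-- The boundary quadratic form `T⁻` at right endpoints (outward normal `n = 1`)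
in the error analysis of the semi-discrete HDG method for the linearized
fifth-order KdV equation. -/
noncomputable def Tminus (β tsu tsq tsp tru trq trp ηu ηq ηp ηut ηqt ηpt : ℝ) : ℝ :=
  (-β * tsu) * ηu ^ 2 + (β * trq) * ηq ^ 2 + (-β / 2) * ηp ^ 2
    + (-1 / (2 * β) - β * tsu) * ηut ^ 2 + (-1 / (2 * β) + β * trq) * ηqt ^ 2
    + (-β / 2) * ηpt ^ 2
    + (-tru + tsu * tru) * (ηu * ηut) + (-tsq + tsq * trq) * (ηq * ηqt)
    + (trp + tsp * trp) * (ηp * ηpt)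
    + (-β * tsq + β * tru) * (ηu * ηq) + (-β * tsp) * (ηu * ηp)
    + (β * trp) * (ηp * ηq)
    + (1 - trq + tsq * tru) * (ηq * ηut) + (-tsu + tsu * trq) * (ηu * ηqt)
    + (1 - tsp + tsp * trq) * (ηp * ηqt) + (trq + tsq * trp) * (ηq * ηpt)
    + (tru + tsu * trp) * (ηu * ηpt) + (-trp + tsp * tru) * (ηp * ηut)
    + (1 / β - β * tsp) * (ηut * ηpt) + (-β * tsq + β * tru) * (ηqt * ηut)
    + (β * trp) * (ηqt * ηpt)

theorem stmt_4 (β tsu tsq tsp tru trq trp : ℝ) (hβ : β ≠ 0)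
    (hβval : β = -1) (htsu : tsu = 1) (htrq : trq = -1)
    (htsq : tsq = 0) (htsp : tsp = 0) (htru : tru = 0) (htrp : trp = 0) :
    ∀ ηu ηq ηp ηut ηqt ηpt : ℝ,
      Tminus β tsu tsq tsp tru trq trp ηu ηq ηp ηut ηqt ηpt
        = (ηu - ηqt) ^ 2 + (1 / 2) * (ηp + ηqt) ^ 2
          + (1 / 2) * (ηpt - ηq - ηut) ^ 2 + (1 / 2) * (ηq + ηut) ^ 2
          + (1 / 2) * ηut ^ 2
      ∧ 0 ≤ Tminus β tsu tsq tsp tru trq trp ηu ηq ηp ηut ηqt ηpt := by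
  intro ηu ηq ηp ηut ηqt ηpt
  subst hβval htsu htrq htsq htsp htru htrp
  have h : Tminus (-1) 1 0 0 0 (-1) 0 ηu ηq ηp ηut ηqt ηpt
      = (ηu - ηqt) ^ 2 + (1 / 2) * (ηp + ηqt) ^ 2
        + (1 / 2) * (ηpt - ηq - ηut) ^ 2 + (1 / 2) * (ηq + ηut) ^ 2
        + (1 / 2) * ηut ^ 2 := by
    unfold Tminus; ring
  exact ⟨h, h ▸ by positivity⟩
end

section
/- Let L > 0 and γ, β ∈ ℝ. Let Ψ_u, Ψ_q, Ψ_p, Ψ_r, Ψ_s : ℝ → ℝ be continuously differentiable on [0, L] with Ψ_ω(0) = Ψ_ω(L) for each ω ∈ {u, q, p, r, s}, and let η_u, η_q, η_p, η_r, η_s : [0, L] → ℝ be continuous functions such that on [0, L]: Ψ_u' − Ψ_q = η_s, Ψ_q' − Ψ_p = −η_r, Ψ_p' − Ψ_r = η_p, Ψ_r' − Ψ_s = −η_q, and β Ψ_s' + γ Ψ_u = η_u. Then γ ∫₀ᴸ Ψ_u(x)² dx = ∫₀ᴸ ( β η_s(x) Ψ_s(x) + β η_r(x) Ψ_r(x)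 + β η_p(x) Ψ_p(x) + β η_q(x) Ψ_q(x) + η_u(x) Ψ_u(x) ) dx. -/
theorem stmt_11 (L γ β : ℝ) (hL : 0 < L)
    (Ψu Ψq Ψp Ψr Ψs DΨu DΨq DΨp DΨr DΨs : ℝ → ℝ)
    (ηu ηq ηp ηr ηs : ℝ → ℝ)
    (hΨu : ∀ x ∈ Set.Icc 0 L, HasDerivWithinAt Ψu (DΨu x) (Set.Icc 0 L) x)
    (hΨq : ∀ x ∈ Set.Icc 0 L, HasDerivWithinAt Ψq (DΨq x) (Set.Icc 0 L) x)
    (hΨp : ∀ x ∈ Set.Icc 0 L, HasDerivWithinAt Ψp (DΨp x) (Set.Icc 0 L) x)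
    (hΨr : ∀ x ∈ Set.Icc 0 L, HasDerivWithinAt Ψr (DΨr x) (Set.Icc 0 L) x)
    (hΨs : ∀ x ∈ Set.Icc 0 L, HasDerivWithinAt Ψs (DΨs x) (Set.Icc 0 L) x)
    (hDu : ContinuousOn DΨu (Set.Icc 0 L)) (hDq : ContinuousOn DΨq (Set.Icc 0 L))
    (hDp : ContinuousOn DΨp (Set.Icc 0 L)) (hDr : ContinuousOn DΨr (Set.Icc 0 L))
    (hDs : ContinuousOn DΨs (Set.Icc 0 L))
    (hηu : ContinuousOn ηu (Set.Icc 0 L)) (hηq : ContinuousOn ηq (Set.Icc 0 L))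
    (hηp : ContinuousOn ηp (Set.Icc 0 L)) (hηr : ContinuousOn ηr (Set.Icc 0 L))
    (hηs : ContinuousOn ηs (Set.Icc 0 L))
    (hperu : Ψu 0 = Ψu L) (hperq : Ψq 0 = Ψq L) (hperp : Ψp 0 = Ψp L)
    (hperr : Ψr 0 = Ψr L) (hpers : Ψs 0 = Ψs L)
    (heq1 : ∀ x ∈ Set.Icc 0 L, DΨu x - Ψq x = ηs x)
    (heq2 : ∀ x ∈ Set.Icc 0 L, DΨq x - Ψp x = -ηr x)
    (heq3 : ∀ x ∈ Set.Icc 0 L, DΨp x - Ψr x = ηp x)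
    (heq4 : ∀ x ∈ Set.Icc 0 L, DΨr x - Ψs x = -ηq x)
    (heq5 : ∀ x ∈ Set.Icc 0 L, β * DΨs x + γ * Ψu x = ηu x) :
    γ * ∫ x in (0:ℝ)..L, (Ψu x) ^ 2 =
      ∫ x in (0:ℝ)..L,
        (β * ηs x * Ψs x + β * ηr x * Ψr x + β * ηp x * Ψp x
          + β * ηq x * Ψq x + ηu x * Ψu x) := by
  have hsub : Set.uIcc (0:ℝ) L = Set.Icc 0 L := Set.uIcc_of_le hL.le
  have cΨu : ContinuousOn Ψu (Set.Icc 0 L) := fun x hx => (hΨu x hx).continuousWithinAt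
  have cΨq : ContinuousOn Ψq (Set.Icc 0 L) := fun x hx => (hΨq x hx).continuousWithinAt
  have cΨp : ContinuousOn Ψp (Set.Icc 0 L) := fun x hx => (hΨp x hx).continuousWithinAt
  have cΨr : ContinuousOn Ψr (Set.Icc 0 L) := fun x hx => (hΨr x hx).continuousWithinAt
  have cΨs : ContinuousOn Ψs (Set.Icc 0 L) := fun x hx => (hΨs x hx).continuousWithinAt
  set F : ℝ → ℝ := fun x => β * (Ψu x * Ψs x - Ψq x * Ψr x + Ψp x ^ 2 / 2) with hF
  set DF : ℝ → ℝ := fun x =>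
    β * (DΨu x * Ψs x + Ψu x * DΨs x - (DΨq x * Ψr x + Ψq x * DΨr x) + Ψp x * DΨp x)
    with hDF
  have hFderiv : ∀ x ∈ Set.Icc 0 L, HasDerivWithinAt F (DF x) (Set.Icc 0 L) x := by
    intro x hx
    have h := ((((hΨu x hx).mul (hΨs x hx)).sub ((hΨq x hx).mul (hΨr x hx))).add
      (((hΨp x hx).pow 2).div_const 2)).const_mul β
    convert h using 1
    · rfl
    · rfl
    · rfl
    simp only [hDF]
    push_cast
    ring
  have hDFcont : ContinuousOn DF (Set.Icc 0 L) :=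
    continuousOn_const.mul
      ((((hDu.mul cΨs).add (cΨu.mul hDs)).sub ((hDq.mul cΨr).add (cΨq.mul hDr))).add
        (cΨp.mul hDp))
  have hDFint : IntervalIntegrable DF MeasureTheory.volume 0 L :=
    ContinuousOn.intervalIntegrable (by rw [hsub]; exact hDFcont)
  have hu2int : IntervalIntegrable (fun x => γ * Ψu x ^ 2) MeasureTheory.volume 0 L :=
    ContinuousOn.intervalIntegrable (by rw [hsub]; exact continuousOn_const.mul (cΨu.pow 2))
  have hFTC : (∫ x in (0:ℝ)..L, DF x) = F L - F 0 := by
    apply intervalIntegral.integral_eq_sub_of_hasDeriv_right_of_le hL.le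
      (fun x hx => (hFderiv x hx).continuousWithinAt)
      (fun x hx => (((hFderiv x (Set.mem_Icc_of_Ioo hx)).hasDerivAt
        (Icc_mem_nhds hx.1 hx.2)).hasDerivWithinAt))
    exact hDFint
  have hFper : F L - F 0 = 0 := by
    simp only [hF, hperu, hperq, hperp, hperr, hpers]; ring
  have hcongr : (∫ x in (0:ℝ)..L,
      (β * ηs x * Ψs x + β * ηr x * Ψr x + β * ηp x * Ψp x
        + β * ηq x * Ψq x + ηu x * Ψu x)) =
      ∫ x in (0:ℝ)..L, (γ * Ψu x ^ 2 + DF x) := by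
    apply intervalIntegral.integral_congr
    intro x hx
    rw [hsub] at hx
    have f1 : ηs x = DΨu x - Ψq x := (heq1 x hx).symm
    have f2 : ηr x = Ψp x - DΨq x := by linarith [heq2 x hx]
    have f3 : ηp x = DΨp x - Ψr x := (heq3 x hx).symm
    have f4 : ηq x = Ψs x - DΨr x := by linarith [heq4 x hx]
    have f5 : ηu x = β * DΨs x + γ * Ψu x := (heq5 x hx).symm
    simp only [hDF, f1, f2, f3, f4, f5]
    ring
  rw [hcongr, intervalIntegral.integral_add hu2int hDFint, hFTC, hFper,
    intervalIntegral.integral_const_mul]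
  ring
end

section
/- Let L > 0, γ > 0, and β ≠ 0. There exists a constant C > 0, depending only on L, γ and β, with the following property: whenever Ψ_u, Ψ_q, Ψ_p, Ψ_r, Ψ_s : ℝ → ℝ are continuously differentiable on [0, L] with Ψ_ω(0) = Ψ_ω(L) for each ω ∈ {u, q, p, r, s}, and η_u, η_q, η_p, η_r, η_s : [0, L] → ℝ are continuous functions such that on [0, L]: Ψ_u' − Ψ_q = η_s, Ψ_q' − Ψ_p = −η_r, Ψ_p' − Ψ_r = η_p, Ψ_r' − Ψ_s = −η_q, and β Ψ_s' + γ Ψ_u = η_u, one has Σ_{ω ∈ {u,q,p,r,s}} ( (∫₀ᴸ Ψ_ω(x)² dx)^{1/2} + (∫₀ᴸ Ψ_ω'(x)² dx)^{1/2} ) ≤ C · Σ_{ω ∈ {u,q,p,r,s}} (∫₀ᴸ η_ω(x)² dx)^{1/2}. -/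
open intervalIntegral Set MeasureTheory

namespace Stmt12Aux

noncomputable def N (L : ℝ) (f : ℝ → ℝ) : ℝ := Real.sqrt (∫ x in (0:ℝ)..L, f x ^ 2)

variable {L : ℝ}

lemma integrable_of_contOn (hL : (0:ℝ) ≤ L) {f : ℝ → ℝ} (hf : ContinuousOn f (Icc 0 L)) :
    IntervalIntegrable f volume 0 L := by
  apply ContinuousOn.intervalIntegrable
  rwa [uIcc_of_le hL]

lemma sqInt_nonneg (L : ℝ) (hL : (0:ℝ) ≤ L) (f : ℝ → ℝ) :
    0 ≤ ∫ x in (0:ℝ)..L, f x ^ 2 :=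
  intervalIntegral.integral_nonneg hL (fun x _ => sq_nonneg _)

lemma N_nonneg (L : ℝ) (f : ℝ → ℝ) : 0 ≤ N L f := Real.sqrt_nonneg _

lemma N_sq (hL : (0:ℝ) ≤ L) (f : ℝ → ℝ) : (N L f) ^ 2 = ∫ x in (0:ℝ)..L, f x ^ 2 :=
  Real.sq_sqrt (sqInt_nonneg L hL f)

/-- Cauchy–Schwarz. -/
lemma cs (hL : (0:ℝ) ≤ L) {f g : ℝ → ℝ} (hf : ContinuousOn f (Icc 0 L))
    (hg : ContinuousOn g (Icc 0 L)) :
    |∫ x in (0:ℝ)..L, f x * g x| ≤ N L f * N L g := by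
  set A := ∫ x in (0:ℝ)..L, g x ^ 2 with hA
  set B := ∫ x in (0:ℝ)..L, f x * g x with hB
  set Cc := ∫ x in (0:ℝ)..L, f x ^ 2 with hC
  have hquad : ∀ t : ℝ, 0 ≤ A * (t * t) + (2 * B) * t + Cc := by
    intro t
    have hf2 : IntervalIntegrable (fun x => f x * f x) volume 0 L := integrable_of_contOn hL (hf.mul hf)
    have hg2 : IntervalIntegrable (fun x => g x * g x) volume 0 L := integrable_of_contOn hL (hg.mul hg)
    have hfg : IntervalIntegrable (fun x => f x * g x) volume 0 L := integrable_of_contOn hL (hf.mul hg)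
    have h1 : (A * (t*t) + (2*B) * t + Cc) = ∫ x in (0:ℝ)..L, (t * g x + f x)^2 := by
      have e1 : ∀ x : ℝ, (t * g x + f x)^2
          = (t*t) * (g x * g x) + ((2*t) * (f x * g x) + f x * f x) := by intro x; ring
      simp only [e1]
      rw [intervalIntegral.integral_add ((hg2.const_mul _)) ((hfg.const_mul _).add hf2),
          intervalIntegral.integral_add (hfg.const_mul _) hf2,
          intervalIntegral.integral_const_mul, intervalIntegral.integral_const_mul]
      have : A = ∫ x in (0:ℝ)..L, g x * g x := by
        rw [hA]; apply intervalIntegral.integral_congr; intro x _; exact sq (g x)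
      have hCc : Cc = ∫ x in (0:ℝ)..L, f x * f x := by
        rw [hC]; apply intervalIntegral.integral_congr; intro x _; exact sq (f x)
      rw [this, hCc, hB]; ring
    rw [h1]
    exact intervalIntegral.integral_nonneg hL (fun x _ => sq_nonneg _)
  have hd := discrim_le_zero hquad
  rw [discrim] at hd
  have h2 : B^2 ≤ Cc * A := by nlinarith
  have : |B| ≤ Real.sqrt (Cc * A) := by
    rw [← Real.sqrt_sq_eq_abs]
    exact Real.sqrt_le_sqrt h2
  calc |B| ≤ Real.sqrt (Cc * A) := this
    _ = N L f * N L g := by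
        rw [Real.sqrt_mul (sqInt_nonneg L hL f)]; rfl

end Stmt12Aux

namespace Stmt12Aux
open Set MeasureTheory
variable {L : ℝ}

/-- if f = g on Icc then same interval integral -/
lemma int_congr (hL : (0:ℝ) ≤ L) {f g : ℝ → ℝ} (h : ∀ x ∈ Icc (0:ℝ) L, f x = g x) :
    (∫ x in (0:ℝ)..L, f x) = ∫ x in (0:ℝ)..L, g x := by
  apply intervalIntegral.integral_congr
  rwa [uIcc_of_le hL]

lemma N_congr (hL : (0:ℝ) ≤ L) {f g : ℝ → ℝ} (h : ∀ x ∈ Icc (0:ℝ) L, f x = g x) :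
    N L f = N L g := by
  unfold N
  congr 1
  exact int_congr hL (fun x hx => by rw [h x hx])

/-- Minkowski -/
lemma N_add_le (hL : (0:ℝ) ≤ L) {f g : ℝ → ℝ} (hf : ContinuousOn f (Icc 0 L))
    (hg : ContinuousOn g (Icc 0 L)) :
    N L (fun x => f x + g x) ≤ N L f + N L g := by
  have hf2 : IntervalIntegrable (fun x => f x * f x) volume 0 L := integrable_of_contOn hL (hf.mul hf)
  have hg2 : IntervalIntegrable (fun x => g x * g x) volume 0 L := integrable_of_contOn hL (hg.mul hg)
  have hfg : IntervalIntegrable (fun x => f x * g x) volume 0 L := integrable_of_contOn hL (hf.mul hg)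
  have key : (∫ x in (0:ℝ)..L, (f x + g x)^2) ≤ (N L f + N L g)^2 := by
    have e1 : ∀ x : ℝ, (f x + g x)^2 = f x * f x + (2 * (f x * g x) + g x * g x) := by
      intro x; ring
    simp only [e1]
    rw [intervalIntegral.integral_add hf2 ((hfg.const_mul _).add hg2),
        intervalIntegral.integral_add (hfg.const_mul _) hg2,
        intervalIntegral.integral_const_mul]
    have h1 : (∫ x in (0:ℝ)..L, f x * f x) = (N L f)^2 := by
      rw [N_sq hL]; exact int_congr hL (fun x _ => (sq (f x)).symm)
    have h2 : (∫ x in (0:ℝ)..L, g x * g x) = (N L g)^2 := by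
      rw [N_sq hL]; exact int_congr hL (fun x _ => (sq (g x)).symm)
    have h3 : (∫ x in (0:ℝ)..L, f x * g x) ≤ N L f * N L g :=
      le_trans (le_abs_self _) (cs hL hf hg)
    rw [h1, h2]; nlinarith
  have := Real.sqrt_le_sqrt key
  calc N L (fun x => f x + g x) ≤ Real.sqrt ((N L f + N L g)^2) := this
    _ = |N L f + N L g| := Real.sqrt_sq_eq_abs _
    _ = N L f + N L g := abs_of_nonneg (add_nonneg (N_nonneg _ _) (N_nonneg _ _))

/-- scaling -/
lemma N_const_mul (hL : (0:ℝ) ≤ L) (c : ℝ) (f : ℝ → ℝ) :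
    N L (fun x => c * f x) = |c| * N L f := by
  unfold N
  have : (∫ x in (0:ℝ)..L, (c * f x)^2) = c^2 * ∫ x in (0:ℝ)..L, f x ^ 2 := by
    rw [← intervalIntegral.integral_const_mul]
    exact int_congr hL (fun x _ => by ring)
  rw [this, Real.sqrt_mul (sq_nonneg c), Real.sqrt_sq_eq_abs]

/-- FTC for HasDerivWithinAt on Icc -/
lemma ftc (hL : (0:ℝ) ≤ L) {f f' : ℝ → ℝ}
    (hd : ∀ x ∈ Icc (0:ℝ) L, HasDerivWithinAt f (f' x) (Icc (0:ℝ) L) x)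
    (hc : ContinuousOn f' (Icc 0 L)) :
    (∫ x in (0:ℝ)..L, f' x) = f L - f 0 := by
  apply intervalIntegral.integral_eq_sub_of_hasDeriv_right_of_le hL
  · exact fun x hx => (hd x hx).continuousWithinAt
  · intro x hx
    have hx' : Icc (0:ℝ) L ∈ nhds x := Icc_mem_nhds hx.1 hx.2
    exact ((hd x (Ioo_subset_Icc_self hx)).hasDerivAt hx').hasDerivWithinAt
  · exact integrable_of_contOn hL hc

lemma contOn_of_deriv (hL : (0:ℝ) ≤ L) {f f' : ℝ → ℝ}
    (hd : ∀ x ∈ Icc (0:ℝ) L, HasDerivWithinAt f (f' x) (Icc (0:ℝ) L) x) :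
    ContinuousOn f (Icc 0 L) := fun x hx => (hd x hx).continuousWithinAt

/-- periodic integration by parts -/
lemma ibp (hL : (0:ℝ) ≤ L) {f f' g g' : ℝ → ℝ}
    (hdf : ∀ x ∈ Icc (0:ℝ) L, HasDerivWithinAt f (f' x) (Icc (0:ℝ) L) x)
    (hdg : ∀ x ∈ Icc (0:ℝ) L, HasDerivWithinAt g (g' x) (Icc (0:ℝ) L) x)
    (hcf : ContinuousOn f' (Icc 0 L)) (hcg : ContinuousOn g' (Icc 0 L))
    (hperf : f 0 = f L) (hperg : g 0 = g L) :
    (∫ x in (0:ℝ)..L, f' x * g x) = - ∫ x in (0:ℝ)..L, f x * g' x := by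
  have hdfg : ∀ x ∈ Icc (0:ℝ) L,
      HasDerivWithinAt (fun x => f x * g x) (f' x * g x + f x * g' x) (Icc (0:ℝ) L) x :=
    fun x hx => (hdf x hx).mul (hdg x hx)
  have hcfg : ContinuousOn (fun x => f' x * g x + f x * g' x) (Icc 0 L) :=
    (hcf.mul (contOn_of_deriv hL hdg)).add ((contOn_of_deriv hL hdf).mul hcg)
  have h := ftc hL hdfg hcfg
  rw [← hperf, ← hperg, sub_self] at h
  have hsplit : (∫ x in (0:ℝ)..L, f' x * g x + f x * g' x)
      = (∫ x in (0:ℝ)..L, f' x * g x) + ∫ x in (0:ℝ)..L, f x * g' x := by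
    exact intervalIntegral.integral_add
      (integrable_of_contOn hL (hcf.mul (contOn_of_deriv hL hdg)))
      (integrable_of_contOn hL ((contOn_of_deriv hL hdf).mul hcg))
  rw [hsplit] at h
  linarith

end Stmt12Aux

namespace Stmt12Aux
open Set MeasureTheory
variable {L : ℝ}

lemma ftc_sub (hL : (0:ℝ) ≤ L) {f f' : ℝ → ℝ}
    (hd : ∀ x ∈ Icc (0:ℝ) L, HasDerivWithinAt f (f' x) (Icc (0:ℝ) L) x)
    (hc : ContinuousOn f' (Icc 0 L)) {y x : ℝ} (hy : y ∈ Icc (0:ℝ) L) (hx : x ∈ Icc (0:ℝ) L) :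
    (∫ t in y..x, f' t) = f x - f y := by
  have hy' : y ∈ uIcc (0:ℝ) L := by rw [uIcc_of_le hL]; exact hy
  have hx' : x ∈ uIcc (0:ℝ) L := by rw [uIcc_of_le hL]; exact hx
  have hsub : uIcc y x ⊆ Icc (0:ℝ) L := by
    rw [← uIcc_of_le hL]; exact uIcc_subset_uIcc hy' hx'
  apply intervalIntegral.integral_eq_sub_of_hasDeriv_right
  · exact (contOn_of_deriv hL hd).mono hsub
  · intro t ht
    have h0 : (0:ℝ) ≤ y ⊓ x := le_min hy.1 hx.1
    have h1 : y ⊔ x ≤ L := max_le hy.2 hx.2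
    have ht' : t ∈ Ioo (0:ℝ) L := ⟨lt_of_le_of_lt h0 ht.1, lt_of_lt_of_le ht.2 h1⟩
    have hmem : Icc (0:ℝ) L ∈ nhds t := Icc_mem_nhds ht'.1 ht'.2
    exact ((hd t (Ioo_subset_Icc_self ht')).hasDerivAt hmem).hasDerivWithinAt
  · exact (integrable_of_contOn hL hc).mono_set (uIcc_subset_uIcc hy' hx')

lemma poincare (hL : (0:ℝ) < L) {f f' : ℝ → ℝ}
    (hd : ∀ x ∈ Icc (0:ℝ) L, HasDerivWithinAt f (f' x) (Icc (0:ℝ) L) x)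
    (hc : ContinuousOn f' (Icc 0 L)) :
    N L f ≤ |∫ x in (0:ℝ)..L, f x| / Real.sqrt L + L * N L f' := by
  have hL' : (0:ℝ) ≤ L := hL.le
  have hfc : ContinuousOn f (Icc 0 L) := contOn_of_deriv hL' hd
  set B := ∫ x in (0:ℝ)..L, |f' x| with hBdef
  have habs_cont : ContinuousOn (fun x => |f' x|) (Icc 0 L) := hc.abs
  have hB : B ≤ Real.sqrt L * N L f' := by
    have h1 : |∫ x in (0:ℝ)..L, |f' x| * 1| ≤ N L (fun x => |f' x|) * N L (fun _ => 1) :=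
      cs hL' habs_cont continuousOn_const
    have e1 : N L (fun x => |f' x|) = N L f' := by
      unfold N; congr 1; exact int_congr hL' (fun x _ => by rw [sq_abs])
    have e2 : N L (fun _ : ℝ => (1:ℝ)) = Real.sqrt L := by unfold N; simp
    rw [e1, e2] at h1
    calc B = ∫ x in (0:ℝ)..L, |f' x| * 1 := by simp [hBdef]
      _ ≤ |∫ x in (0:ℝ)..L, |f' x| * 1| := le_abs_self _
      _ ≤ N L f' * Real.sqrt L := h1
      _ = Real.sqrt L * N L f' := mul_comm _ _
  have hBnn : 0 ≤ B := intervalIntegral.integral_nonneg hL' (fun x _ => abs_nonneg _)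
  set I := ∫ x in (0:ℝ)..L, f x with hIdef
  set M := |I| / L + B with hMdef
  have hMnn : 0 ≤ M := add_nonneg (div_nonneg (abs_nonneg _) hL') hBnn
  have hdiff : ∀ x ∈ Icc (0:ℝ) L, ∀ y ∈ Icc (0:ℝ) L, |f x - f y| ≤ B := by
    intro x hx y hy
    rw [← ftc_sub hL' hd hc hy hx]
    rcases le_total y x with h | h
    · calc |∫ t in y..x, f' t| ≤ ∫ t in y..x, |f' t| :=
            intervalIntegral.abs_integral_le_integral_abs h
        _ ≤ B := intervalIntegral.integral_mono_interval hy.1 h hx.2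
            (Filter.Eventually.of_forall (fun t => abs_nonneg _))
            (integrable_of_contOn hL' habs_cont)
    · rw [intervalIntegral.integral_symm, abs_neg]
      calc |∫ t in x..y, f' t| ≤ ∫ t in x..y, |f' t| :=
            intervalIntegral.abs_integral_le_integral_abs h
        _ ≤ B := intervalIntegral.integral_mono_interval hx.1 h hy.2
            (Filter.Eventually.of_forall (fun t => abs_nonneg _))
            (integrable_of_contOn hL' habs_cont)
  have hpt : ∀ x ∈ Icc (0:ℝ) L, |f x| ≤ M := by
    intro x hx
    have h1 : L * f x - I = ∫ y in (0:ℝ)..L, (f x - f y) := by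
      rw [intervalIntegral.integral_sub intervalIntegrable_const (integrable_of_contOn hL' hfc)]
      simp [hIdef, mul_comm]
    have h2 : |L * f x - I| ≤ L * B := by
      rw [h1]
      calc |∫ y in (0:ℝ)..L, (f x - f y)| ≤ ∫ y in (0:ℝ)..L, |f x - f y| :=
            intervalIntegral.abs_integral_le_integral_abs hL'
        _ ≤ ∫ _y in (0:ℝ)..L, B := by
            apply intervalIntegral.integral_mono_on hL'
              (integrable_of_contOn hL' (continuousOn_const.sub hfc).abs)
              intervalIntegrable_const
            exact fun y hy => hdiff x hx y hy
        _ = L * B := by simp [mul_comm]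
    have h4 : L * |f x| ≤ |I| + L * B := by
      have h5 : |L * f x| - |I| ≤ |L * f x - I| := abs_sub_abs_le_abs_sub _ _
      have h6 : |L * f x| = L * |f x| := by rw [abs_mul, abs_of_nonneg hL']
      linarith
    rw [hMdef, div_add' _ _ _ hL.ne', le_div_iff₀ hL]
    nlinarith
  have hint : (∫ x in (0:ℝ)..L, f x ^ 2) ≤ L * M ^ 2 := by
    calc (∫ x in (0:ℝ)..L, f x ^ 2) ≤ ∫ _x in (0:ℝ)..L, M ^ 2 := by
          apply intervalIntegral.integral_mono_on hL'
            (integrable_of_contOn hL' (hfc.mul hfc) |>.congr ?_)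
            intervalIntegrable_const
          · intro x hx
            have h := hpt x hx
            nlinarith [abs_nonneg (f x), sq_abs (f x)]
          · intro x _; exact (sq (f x)).symm
      _ = L * M ^ 2 := by simp [mul_comm]
  have hsL : (0:ℝ) < Real.sqrt L := Real.sqrt_pos.mpr hL
  have hLL : Real.sqrt L * Real.sqrt L = L := Real.mul_self_sqrt hL'
  have hNle : N L f ≤ Real.sqrt L * M := by
    calc N L f ≤ Real.sqrt (L * M ^ 2) := Real.sqrt_le_sqrt hint
      _ = Real.sqrt L * M := by rw [Real.sqrt_mul hL', Real.sqrt_sq hMnn]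
  have e : Real.sqrt L * (|I| / L) = |I| / Real.sqrt L := by
    rw [eq_div_iff hsL.ne']
    field_simp
    linear_combination |I| * hLL
  calc N L f ≤ Real.sqrt L * M := hNle
    _ = |I| / Real.sqrt L + Real.sqrt L * B := by rw [hMdef, mul_add, e]
    _ ≤ |I| / Real.sqrt L + L * N L f' := by
        have h := mul_le_mul_of_nonneg_left hB hsL.le
        rw [← mul_assoc, hLL] at h
        linarith

end Stmt12Aux

namespace Stmt12Aux
open Set MeasureTheory
variable {L : ℝ}

lemma int_le (hL : (0:ℝ) ≤ L) {f : ℝ → ℝ} (hf : ContinuousOn f (Icc 0 L)) :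
    |∫ x in (0:ℝ)..L, f x| ≤ Real.sqrt L * N L f := by
  have h1 : |∫ x in (0:ℝ)..L, (fun _ : ℝ => (1:ℝ)) x * f x| ≤ N L (fun _ => 1) * N L f :=
    cs hL continuousOn_const hf
  have e2 : N L (fun _ : ℝ => (1:ℝ)) = Real.sqrt L := by unfold N; simp
  rw [e2] at h1
  simpa using h1

lemma poincare' (hL : (0:ℝ) < L) {f f' : ℝ → ℝ}
    (hd : ∀ x ∈ Icc (0:ℝ) L, HasDerivWithinAt f (f' x) (Icc (0:ℝ) L) x)
    (hc : ContinuousOn f' (Icc 0 L)) {m : ℝ}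
    (hm : |∫ x in (0:ℝ)..L, f x| ≤ Real.sqrt L * m) :
    N L f ≤ m + L * N L f' := by
  have hsL : (0:ℝ) < Real.sqrt L := Real.sqrt_pos.mpr hL
  have h1 := poincare hL hd hc
  have h2 : |∫ x in (0:ℝ)..L, f x| / Real.sqrt L ≤ m := by
    rw [div_le_iff₀ hsL]
    calc |∫ x in (0:ℝ)..L, f x| ≤ Real.sqrt L * m := hm
      _ = m * Real.sqrt L := mul_comm _ _
  linarith

lemma quad_absorb {γ x e a b : ℝ} (hγ : 0 < γ) (hx : 0 ≤ x) (he : 0 ≤ e) (ha : 0 ≤ a)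
    (hb : 0 ≤ b) (h : γ * x ^ 2 ≤ a * e * x + b * e ^ 2) :
    x ≤ ((a + b) / γ + 1) * e := by
  have hdiv : 0 ≤ (a + b) / γ := div_nonneg (add_nonneg ha hb) hγ.le
  rcases le_or_gt x e with h' | h'
  · nlinarith [mul_nonneg hdiv he]
  · have hx0 : 0 < x := lt_of_le_of_lt he h'
    have h2 : (γ * x) * x ≤ ((a + b) * e) * x := by nlinarith [mul_nonneg hb he]
    have h3 : γ * x ≤ (a + b) * e := le_of_mul_le_mul_right h2 hx0
    have h4 : x ≤ ((a + b) / γ) * e := by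
      rw [div_mul_eq_mul_div, le_div_iff₀ hγ]
      nlinarith
    nlinarith

end Stmt12Aux


namespace Stmt12Aux

lemma quad_absorb' {γ x e a b : ℝ} (hγ : 0 < γ) (hx : 0 ≤ x) (he : 0 ≤ e) (ha : 0 ≤ a)
    (hb : 0 ≤ b) (h : γ * x ^ 2 ≤ a * e * x + b * e ^ 2) :
    x ≤ ((a + b) / γ + 1) * e := by
  have hdiv : 0 ≤ (a + b) / γ := div_nonneg (add_nonneg ha hb) hγ.le
  rcases le_or_gt x e with h' | h'
  · nlinarith [mul_nonneg hdiv he]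
  · have hx0 : 0 < x := lt_of_le_of_lt he h'
    have h2 : (γ * x) * x ≤ ((a + b) * e) * x := by nlinarith [mul_nonneg hb he]
    have h3 : γ * x ≤ (a + b) * e := le_of_mul_le_mul_right h2 hx0
    have h4 : x ≤ ((a + b) / γ) * e := by
      rw [div_mul_eq_mul_div, le_div_iff₀ hγ]
      nlinarith
    nlinarith


lemma chain_core (L g bb B1 B2 k0 k1 k2 k3 k4 k5 k6 k7 k8 c3 C : ℝ)
    (hL : (0:ℝ) ≤ L) (hg : (0:ℝ) < g) (hbb : 0 ≤ bb) (hB1 : 0 ≤ B1) (hB2 : 0 ≤ B2)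
    (hk0 : B1 + B2 ≤ k0) (hk1 : 1 + L*k0 ≤ k1) (hk2 : k1 + 1 ≤ k2) (hk3 : 1 + L*k2 ≤ k3)
    (hk4 : k3 + 1 ≤ k4) (hk5 : 1 + L*k4 ≤ k5) (hk6 : k5 + 1 ≤ k6) (hk7 : 1 + L*k6 ≤ k7)
    (hk8 : k7 + 1 ≤ k8)
    (hc3 : ((1 + bb*(k1+k3+k5+k7)) + bb*(k1+k3+k5+k7))/g + 1 ≤ c3)
    (hC : c3 + (k0+k1+k2+k3+k4+k5+k6+k7+k8)*(1+c3) + 1 ≤ C) :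
    ∀ X NDu Nq NDq Np NDp Nr NDr Ns NDs nu nq np nr ns : ℝ,
      0 ≤ X → 0 ≤ NDu → 0 ≤ Nq → 0 ≤ NDq → 0 ≤ Np → 0 ≤ NDp → 0 ≤ Nr → 0 ≤ NDr →
      0 ≤ Ns → 0 ≤ NDs → 0 ≤ nu → 0 ≤ nq → 0 ≤ np → 0 ≤ nr → 0 ≤ ns →
      NDs ≤ B1*nu + B2*X →
      Ns ≤ nq + L*NDs →
      NDr ≤ Ns + nq →
      Nr ≤ np + L*NDr →
      NDp ≤ Nr + np →
      Np ≤ nr + L*NDp →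
      NDq ≤ Np + nr →
      Nq ≤ ns + L*NDq →
      NDu ≤ Nq + ns →
      g*X^2 ≤ nu*X + bb*(np*Np + nq*Nq + nr*Nr + ns*Ns) →
      (X+NDu)+(Nq+NDq)+(Np+NDp)+(Nr+NDr)+(Ns+NDs) ≤ C*(nu+nq+np+nr+ns) := by
  intro X NDu Nq NDq Np NDp Nr NDr Ns NDs nu nq np nr ns
  intro hX hNDu hNq hNDq hNp hNDp hNr hNDr hNs hNDs hnu hnq hnp hnr hns
  intro i1 i2 i3 i4 i5 i6 i7 i8 i9 ie
  have hk0n : 0 ≤ k0 := le_trans (add_nonneg hB1 hB2) hk0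
  have hk1n : 0 ≤ k1 := le_trans (add_nonneg zero_le_one (mul_nonneg hL hk0n)) hk1
  have hk2n : 0 ≤ k2 := by linarith
  have hk3n : 0 ≤ k3 := le_trans (add_nonneg zero_le_one (mul_nonneg hL hk2n)) hk3
  have hk4n : 0 ≤ k4 := by linarith
  have hk5n : 0 ≤ k5 := le_trans (add_nonneg zero_le_one (mul_nonneg hL hk4n)) hk5
  have hk6n : 0 ≤ k6 := by linarith
  have hk7n : 0 ≤ k7 := le_trans (add_nonneg zero_le_one (mul_nonneg hL hk6n)) hk7
  have hk8n : 0 ≤ k8 := by linarith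
  have hEnn : (0:ℝ) ≤ (nu+nq+np+nr+ns) := by linarith
  have hSnn : (0:ℝ) ≤ ((nu+nq+np+nr+ns)+X) := by linarith
  have hnuE : nu ≤ ((nu+nq+np+nr+ns)+X) := by linarith
  have hnqE : nq ≤ ((nu+nq+np+nr+ns)+X) := by linarith
  have hnpE : np ≤ ((nu+nq+np+nr+ns)+X) := by linarith
  have hnrE : nr ≤ ((nu+nq+np+nr+ns)+X) := by linarith
  have hnsE : ns ≤ ((nu+nq+np+nr+ns)+X) := by linarith
  have hXS : X ≤ ((nu+nq+np+nr+ns)+X) := by linarith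
  have c0 : NDs ≤ k0*((nu+nq+np+nr+ns)+X) := by
    linarith [mul_le_mul_of_nonneg_left hnuE hB1, mul_le_mul_of_nonneg_left hXS hB2,
      mul_le_mul_of_nonneg_right hk0 hSnn]
  have c1 : Ns ≤ k1*((nu+nq+np+nr+ns)+X) := by
    linarith [mul_le_mul_of_nonneg_left c0 hL, mul_le_mul_of_nonneg_right hk1 hSnn]
  have c2 : NDr ≤ k2*((nu+nq+np+nr+ns)+X) := by
    linarith [mul_le_mul_of_nonneg_right hk2 hSnn]
  have c3' : Nr ≤ k3*((nu+nq+np+nr+ns)+X) := by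
    linarith [mul_le_mul_of_nonneg_left c2 hL, mul_le_mul_of_nonneg_right hk3 hSnn]
  have c4 : NDp ≤ k4*((nu+nq+np+nr+ns)+X) := by
    linarith [mul_le_mul_of_nonneg_right hk4 hSnn]
  have c5 : Np ≤ k5*((nu+nq+np+nr+ns)+X) := by
    linarith [mul_le_mul_of_nonneg_left c4 hL, mul_le_mul_of_nonneg_right hk5 hSnn]
  have c6 : NDq ≤ k6*((nu+nq+np+nr+ns)+X) := by
    linarith [mul_le_mul_of_nonneg_right hk6 hSnn]
  have c7 : Nq ≤ k7*((nu+nq+np+nr+ns)+X) := by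
    linarith [mul_le_mul_of_nonneg_left c6 hL, mul_le_mul_of_nonneg_right hk7 hSnn]
  have c8 : NDu ≤ k8*((nu+nq+np+nr+ns)+X) := by
    linarith [mul_le_mul_of_nonneg_right hk8 hSnn]
  have hnuE' : nu ≤ (nu+nq+np+nr+ns) := by linarith
  have hnqE' : nq ≤ (nu+nq+np+nr+ns) := by linarith
  have hnpE' : np ≤ (nu+nq+np+nr+ns) := by linarith
  have hnrE' : nr ≤ (nu+nq+np+nr+ns) := by linarith
  have hnsE' : ns ≤ (nu+nq+np+nr+ns) := by linarith
  have hP : np*Np + nq*Nq + nr*Nr + ns*Ns ≤ (k1+k3+k5+k7)*((nu+nq+np+nr+ns)*((nu+nq+np+nr+ns)+X)) := by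
    linarith [mul_le_mul hnpE' c5 hNp hEnn, mul_le_mul hnqE' c7 hNq hEnn,
               mul_le_mul hnrE' c3' hNr hEnn, mul_le_mul hnsE' c1 hNs hEnn]
  have hT : 0 ≤ k1+k3+k5+k7 := by linarith
  have hquad : g*X^2 ≤ (1 + bb*(k1+k3+k5+k7))*(nu+nq+np+nr+ns)*X + (bb*(k1+k3+k5+k7))*(nu+nq+np+nr+ns)^2 := by
    have h1 : bb*(np*Np + nq*Nq + nr*Nr + ns*Ns) ≤ bb*((k1+k3+k5+k7)*((nu+nq+np+nr+ns)*((nu+nq+np+nr+ns)+X))) :=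
      mul_le_mul_of_nonneg_left hP hbb
    have h2 : nu*X ≤ (nu+nq+np+nr+ns)*X := mul_le_mul_of_nonneg_right hnuE' hX
    linarith [ie, h1, h2]
  have hXE : X ≤ c3 * (nu+nq+np+nr+ns) := by
    have ha : (0:ℝ) ≤ 1 + bb*(k1+k3+k5+k7) := by positivity
    have hb : (0:ℝ) ≤ bb*(k1+k3+k5+k7) := mul_nonneg hbb hT
    have h := quad_absorb' hg hX hEnn ha hb hquad
    calc X ≤ (((1 + bb*(k1+k3+k5+k7)) + bb*(k1+k3+k5+k7))/g + 1) * (nu+nq+np+nr+ns) := h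
      _ ≤ c3 * (nu+nq+np+nr+ns) := mul_le_mul_of_nonneg_right hc3 hEnn
  have hc3n : (0:ℝ) ≤ c3 := by
    have h0 : (0:ℝ) ≤ ((1 + bb*(k1+k3+k5+k7)) + bb*(k1+k3+k5+k7))/g + 1 := by positivity
    linarith
  have hSE : ((nu+nq+np+nr+ns)+X) ≤ (1+c3)*(nu+nq+np+nr+ns) := by linarith
  have hKn : 0 ≤ k0+k1+k2+k3+k4+k5+k6+k7+k8 := by linarith
  have hmul : (k0+k1+k2+k3+k4+k5+k6+k7+k8)*((nu+nq+np+nr+ns)+X) ≤ (k0+k1+k2+k3+k4+k5+k6+k7+k8)*((1+c3)*(nu+nq+np+nr+ns)) :=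
    mul_le_mul_of_nonneg_left hSE hKn
  have hCE := mul_le_mul_of_nonneg_right hC hEnn
  linarith [hCE, hmul, hXE, hEnn, c0, c1, c2, c3', c4, c5, c6, c7, c8]


lemma chain (L g bb B1 B2 : ℝ) (hL : (0:ℝ) < L) (hg : (0:ℝ) < g)
    (hbb : 0 ≤ bb) (hB1 : 0 ≤ B1) (hB2 : 0 ≤ B2) :
    ∃ C : ℝ, 0 < C ∧ ∀ X NDu Nq NDq Np NDp Nr NDr Ns NDs nu nq np nr ns : ℝ,
      0 ≤ X → 0 ≤ NDu → 0 ≤ Nq → 0 ≤ NDq → 0 ≤ Np → 0 ≤ NDp → 0 ≤ Nr → 0 ≤ NDr →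
      0 ≤ Ns → 0 ≤ NDs → 0 ≤ nu → 0 ≤ nq → 0 ≤ np → 0 ≤ nr → 0 ≤ ns →
      NDs ≤ B1*nu + B2*X →
      Ns ≤ nq + L*NDs →
      NDr ≤ Ns + nq →
      Nr ≤ np + L*NDr →
      NDp ≤ Nr + np →
      Np ≤ nr + L*NDp →
      NDq ≤ Np + nr →
      Nq ≤ ns + L*NDq →
      NDu ≤ Nq + ns →
      g*X^2 ≤ nu*X + bb*(np*Np + nq*Nq + nr*Nr + ns*Ns) →
      (X+NDu)+(Nq+NDq)+(Np+NDp)+(Nr+NDr)+(Ns+NDs) ≤ C*(nu+nq+np+nr+ns) := by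
  have hL' : (0:ℝ) ≤ L := hL.le
  set k0 : ℝ := B1 + B2 with hk0
  have hk0n : 0 ≤ k0 := add_nonneg hB1 hB2
  set k1 : ℝ := 1 + L*k0 with hk1
  have hk1n : 0 ≤ k1 := add_nonneg zero_le_one (mul_nonneg hL' hk0n)
  set k2 : ℝ := k1 + 1 with hk2
  have hk2n : 0 ≤ k2 := by linarith
  set k3 : ℝ := 1 + L*k2 with hk3
  have hk3n : 0 ≤ k3 := add_nonneg zero_le_one (mul_nonneg hL' hk2n)
  set k4 : ℝ := k3 + 1 with hk4
  have hk4n : 0 ≤ k4 := by linarith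
  set k5 : ℝ := 1 + L*k4 with hk5
  have hk5n : 0 ≤ k5 := add_nonneg zero_le_one (mul_nonneg hL' hk4n)
  set k6 : ℝ := k5 + 1 with hk6
  have hk6n : 0 ≤ k6 := by linarith
  set k7 : ℝ := 1 + L*k6 with hk7
  have hk7n : 0 ≤ k7 := add_nonneg zero_le_one (mul_nonneg hL' hk6n)
  set k8 : ℝ := k7 + 1 with hk8
  have hk8n : 0 ≤ k8 := by linarith
  set c3 : ℝ := ((1 + bb*(k1+k3+k5+k7)) + bb*(k1+k3+k5+k7))/g + 1 with hc3
  have hc3n : 0 ≤ c3 := by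
    have hT : 0 ≤ k1+k3+k5+k7 := by linarith
    have h9 : 0 ≤ ((1 + bb*(k1+k3+k5+k7)) + bb*(k1+k3+k5+k7))/g :=
      div_nonneg (by nlinarith [mul_nonneg hbb hT]) hg.le
    rw [hc3]
    linarith
  set Ks : ℝ := k0+k1+k2+k3+k4+k5+k6+k7+k8 with hKs
  have hKsn : 0 ≤ Ks := by rw [hKs]; linarith
  set C : ℝ := c3 + Ks*(1+c3) + 1 with hC
  have hCpos : 0 < C := by
    have : 0 ≤ Ks*(1+c3) := mul_nonneg hKsn (by linarith)
    rw [hC]; linarith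
  refine ⟨C, hCpos, ?_⟩
  exact chain_core L g bb B1 B2 k0 k1 k2 k3 k4 k5 k6 k7 k8 c3 C hL' hg hbb hB1 hB2
    hk0.ge hk1.ge hk2.ge hk3.ge hk4.ge hk5.ge hk6.ge hk7.ge hk8.ge hc3.ge (by rw [← hKs])

end Stmt12Aux

open Stmt12Aux Set MeasureTheory

theorem stmt_12 (L γ β : ℝ) (hL : 0 < L) (hγ : 0 < γ) (hβ : β ≠ 0) :
    ∃ C : ℝ, 0 < C ∧
      ∀ (Ψu Ψq Ψp Ψr Ψs DΨu DΨq DΨp DΨr DΨs : ℝ → ℝ)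
        (ηu ηq ηp ηr ηs : ℝ → ℝ),
        (∀ x ∈ Set.Icc 0 L, HasDerivWithinAt Ψu (DΨu x) (Set.Icc 0 L) x) →
        (∀ x ∈ Set.Icc 0 L, HasDerivWithinAt Ψq (DΨq x) (Set.Icc 0 L) x) →
        (∀ x ∈ Set.Icc 0 L, HasDerivWithinAt Ψp (DΨp x) (Set.Icc 0 L) x) →
        (∀ x ∈ Set.Icc 0 L, HasDerivWithinAt Ψr (DΨr x) (Set.Icc 0 L) x) →
        (∀ x ∈ Set.Icc 0 L, HasDerivWithinAt Ψs (DΨs x) (Set.Icc 0 L) x) →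
        ContinuousOn DΨu (Set.Icc 0 L) → ContinuousOn DΨq (Set.Icc 0 L) →
        ContinuousOn DΨp (Set.Icc 0 L) → ContinuousOn DΨr (Set.Icc 0 L) →
        ContinuousOn DΨs (Set.Icc 0 L) →
        ContinuousOn ηu (Set.Icc 0 L) → ContinuousOn ηq (Set.Icc 0 L) →
        ContinuousOn ηp (Set.Icc 0 L) → ContinuousOn ηr (Set.Icc 0 L) →
        ContinuousOn ηs (Set.Icc 0 L) →
        Ψu 0 = Ψu L → Ψq 0 = Ψq L → Ψp 0 = Ψp L → Ψr 0 = Ψr L → Ψs 0 = Ψs L →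
        (∀ x ∈ Set.Icc 0 L, DΨu x - Ψq x = ηs x) →
        (∀ x ∈ Set.Icc 0 L, DΨq x - Ψp x = -ηr x) →
        (∀ x ∈ Set.Icc 0 L, DΨp x - Ψr x = ηp x) →
        (∀ x ∈ Set.Icc 0 L, DΨr x - Ψs x = -ηq x) →
        (∀ x ∈ Set.Icc 0 L, β * DΨs x + γ * Ψu x = ηu x) →
        (Real.sqrt (∫ x in (0:ℝ)..L, (Ψu x) ^ 2)
            + Real.sqrt (∫ x in (0:ℝ)..L, (DΨu x) ^ 2))
          + (Real.sqrt (∫ x in (0:ℝ)..L, (Ψq x) ^ 2)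
            + Real.sqrt (∫ x in (0:ℝ)..L, (DΨq x) ^ 2))
          + (Real.sqrt (∫ x in (0:ℝ)..L, (Ψp x) ^ 2)
            + Real.sqrt (∫ x in (0:ℝ)..L, (DΨp x) ^ 2))
          + (Real.sqrt (∫ x in (0:ℝ)..L, (Ψr x) ^ 2)
            + Real.sqrt (∫ x in (0:ℝ)..L, (DΨr x) ^ 2))
          + (Real.sqrt (∫ x in (0:ℝ)..L, (Ψs x) ^ 2)
            + Real.sqrt (∫ x in (0:ℝ)..L, (DΨs x) ^ 2))
        ≤ C * (Real.sqrt (∫ x in (0:ℝ)..L, (ηu x) ^ 2)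
            + Real.sqrt (∫ x in (0:ℝ)..L, (ηq x) ^ 2)
            + Real.sqrt (∫ x in (0:ℝ)..L, (ηp x) ^ 2)
            + Real.sqrt (∫ x in (0:ℝ)..L, (ηr x) ^ 2)
            + Real.sqrt (∫ x in (0:ℝ)..L, (ηs x) ^ 2)) := by
  have hb : (0:ℝ) < |β| := abs_pos.mpr hβ
  obtain ⟨C, hCpos, hmain⟩ := chain L γ |β| (1/|β|) (γ/|β|) hL hγ hb.le
    (by positivity) (div_nonneg hγ.le (abs_nonneg β))
  refine ⟨C, hCpos, ?_⟩
  intro Ψu Ψq Ψp Ψr Ψs DΨu DΨq DΨp DΨr DΨs ηu ηq ηp ηr ηs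
  intro hdu hdq hdp hdr hds hcDu hcDq hcDp hcDr hcDs hcu hcq hcp hcr hcs2
  intro hpu hpq hpp hpr hps heqs heqr heqp heqq hequ
  have hL' : (0:ℝ) ≤ L := hL.le
  have hCu := contOn_of_deriv hL' hdu
  have hCq := contOn_of_deriv hL' hdq
  have hCp := contOn_of_deriv hL' hdp
  have hCr := contOn_of_deriv hL' hdr
  have hCs := contOn_of_deriv hL' hds
  -- derivative rewrite for DΨs
  have eDs : ∀ x ∈ Icc (0:ℝ) L, DΨs x = (1/β) * ηu x + (-(γ/β)) * Ψu x := by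
    intro x hx
    have h := hequ x hx
    field_simp
    linear_combination h
  -- hNDs
  have hNDs : N L DΨs ≤ (1/|β|) * N L ηu + (γ/|β|) * N L Ψu := by
    rw [N_congr hL' eDs]
    calc N L (fun x => (1/β) * ηu x + (-(γ/β)) * Ψu x)
        ≤ N L (fun x => (1/β) * ηu x) + N L (fun x => (-(γ/β)) * Ψu x) :=
          N_add_le hL' (continuousOn_const.mul hcu) (continuousOn_const.mul hCu)
      _ = (1/|β|) * N L ηu + (γ/|β|) * N L Ψu := by
          rw [N_const_mul hL', N_const_mul hL']
          congr 1
          · congr 1; rw [abs_div, abs_one]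
          · congr 1; rw [abs_neg, abs_div, abs_of_pos hγ]
  -- mean helper
  have mean : ∀ (f Df g : ℝ → ℝ),
      (∀ x ∈ Icc (0:ℝ) L, HasDerivWithinAt f (Df x) (Icc (0:ℝ) L) x) →
      ContinuousOn Df (Icc 0 L) → f 0 = f L →
      (∀ x ∈ Icc (0:ℝ) L, Df x = g x) → (∫ x in (0:ℝ)..L, g x) = 0 := by
    intro f Df g hd hc hper he
    have h1 := ftc hL' hd hc
    rw [← hper, sub_self] at h1
    rw [← int_congr hL' he, h1]
  -- mean identities
  have hIs : (∫ x in (0:ℝ)..L, Ψs x) = ∫ x in (0:ℝ)..L, ηq x := by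
    have h0 := mean Ψr DΨr (fun x => Ψs x - ηq x) hdr hcDr hpr
      (fun x hx => by have := heqq x hx; show DΨr x = Ψs x - ηq x; linarith)
    rw [intervalIntegral.integral_sub (integrable_of_contOn hL' hCs)
      (integrable_of_contOn hL' hcq)] at h0
    linarith
  have hIp : (∫ x in (0:ℝ)..L, Ψp x) = ∫ x in (0:ℝ)..L, ηr x := by
    have h0 := mean Ψq DΨq (fun x => Ψp x - ηr x) hdq hcDq hpq
      (fun x hx => by have := heqr x hx; show DΨq x = Ψp x - ηr x; linarith)
    rw [intervalIntegral.integral_sub (integrable_of_contOn hL' hCp)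
      (integrable_of_contOn hL' hcr)] at h0
    linarith
  have hIr : (∫ x in (0:ℝ)..L, Ψr x) = -∫ x in (0:ℝ)..L, ηp x := by
    have h0 := mean Ψp DΨp (fun x => Ψr x + ηp x) hdp hcDp hpp
      (fun x hx => by have := heqp x hx; show DΨp x = Ψr x + ηp x; linarith)
    rw [intervalIntegral.integral_add (integrable_of_contOn hL' hCr)
      (integrable_of_contOn hL' hcp)] at h0
    linarith
  have hIq : (∫ x in (0:ℝ)..L, Ψq x) = -∫ x in (0:ℝ)..L, ηs x := by
    have h0 := mean Ψu DΨu (fun x => Ψq x + ηs x) hdu hcDu hpu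
      (fun x hx => by have := heqs x hx; show DΨu x = Ψq x + ηs x; linarith)
    rw [intervalIntegral.integral_add (integrable_of_contOn hL' hCq)
      (integrable_of_contOn hL' hcs2)] at h0
    linarith
  -- Poincaré bounds
  have hNs : N L Ψs ≤ N L ηq + L * N L DΨs :=
    poincare' hL hds hcDs (by rw [hIs]; exact int_le hL' hcq)
  have hNp : N L Ψp ≤ N L ηr + L * N L DΨp :=
    poincare' hL hdp hcDp (by rw [hIp]; exact int_le hL' hcr)
  have hNr : N L Ψr ≤ N L ηp + L * N L DΨr :=
    poincare' hL hdr hcDr (by rw [hIr, abs_neg]; exact int_le hL' hcp)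
  have hNq : N L Ψq ≤ N L ηs + L * N L DΨq :=
    poincare' hL hdq hcDq (by rw [hIq, abs_neg]; exact int_le hL' hcs2)
  -- derivative norm bounds
  have hNDr : N L DΨr ≤ N L Ψs + N L ηq := by
    have e : ∀ x ∈ Icc (0:ℝ) L, DΨr x = Ψs x + (-1 : ℝ) * ηq x := by
      intro x hx; have := heqq x hx; linarith
    rw [N_congr hL' e]
    calc N L (fun x => Ψs x + (-1:ℝ) * ηq x)
        ≤ N L Ψs + N L (fun x => (-1:ℝ) * ηq x) :=
          N_add_le hL' hCs (continuousOn_const.mul hcq)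
      _ = N L Ψs + N L ηq := by rw [N_const_mul hL']; simp
  have hNDp : N L DΨp ≤ N L Ψr + N L ηp := by
    have e : ∀ x ∈ Icc (0:ℝ) L, DΨp x = Ψr x + ηp x := by
      intro x hx; have := heqp x hx; linarith
    rw [N_congr hL' e]
    exact N_add_le hL' hCr hcp
  have hNDq : N L DΨq ≤ N L Ψp + N L ηr := by
    have e : ∀ x ∈ Icc (0:ℝ) L, DΨq x = Ψp x + (-1 : ℝ) * ηr x := by
      intro x hx; have := heqr x hx; linarith
    rw [N_congr hL' e]
    calc N L (fun x => Ψp x + (-1:ℝ) * ηr x)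
        ≤ N L Ψp + N L (fun x => (-1:ℝ) * ηr x) :=
          N_add_le hL' hCp (continuousOn_const.mul hcr)
      _ = N L Ψp + N L ηr := by rw [N_const_mul hL']; simp
  have hNDu : N L DΨu ≤ N L Ψq + N L ηs := by
    have e : ∀ x ∈ Icc (0:ℝ) L, DΨu x = Ψq x + ηs x := by
      intro x hx; have := heqs x hx; linarith
    rw [N_congr hL' e]
    exact N_add_le hL' hCq hcs2
  -- energy identity
  have heq5int : β * (∫ x in (0:ℝ)..L, DΨs x * Ψu x) + γ * (∫ x in (0:ℝ)..L, Ψu x ^ 2)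
      = ∫ x in (0:ℝ)..L, ηu x * Ψu x := by
    have h0 : (∫ x in (0:ℝ)..L, (β * (DΨs x * Ψu x) + γ * (Ψu x ^ 2)))
        = ∫ x in (0:ℝ)..L, ηu x * Ψu x := by
      apply int_congr hL'
      intro x hx
      have := hequ x hx
      linear_combination Ψu x * this
    rw [intervalIntegral.integral_add
        ((integrable_of_contOn (f := fun x => DΨs x * Ψu x) hL' (hcDs.mul hCu)).const_mul β)
        ((integrable_of_contOn hL' (hCu.mul hCu)).congr
          (fun x _ => (sq (Ψu x)).symm) |>.const_mul γ),
      intervalIntegral.integral_const_mul, intervalIntegral.integral_const_mul] at h0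
    exact h0
  have hibp1 : (∫ x in (0:ℝ)..L, DΨs x * Ψu x) = -∫ x in (0:ℝ)..L, Ψs x * DΨu x :=
    ibp hL' hds hdu hcDs hcDu hps hpu
  have h2 : (∫ x in (0:ℝ)..L, Ψs x * DΨu x)
      = (∫ x in (0:ℝ)..L, Ψs x * Ψq x) + ∫ x in (0:ℝ)..L, ηs x * Ψs x := by
    have h0 : (∫ x in (0:ℝ)..L, Ψs x * DΨu x)
        = ∫ x in (0:ℝ)..L, (Ψs x * Ψq x + ηs x * Ψs x) := by
      apply int_congr hL'
      intro x hx
      have := heqs x hx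
      linear_combination Ψs x * this
    rw [h0]; exact intervalIntegral.integral_add (integrable_of_contOn hL' (hCs.mul hCq))
      (integrable_of_contOn hL' (hcs2.mul hCs))
  have h3 : (∫ x in (0:ℝ)..L, Ψs x * Ψq x)
      = (∫ x in (0:ℝ)..L, DΨr x * Ψq x) + ∫ x in (0:ℝ)..L, ηq x * Ψq x := by
    have h0 : (∫ x in (0:ℝ)..L, Ψs x * Ψq x)
        = ∫ x in (0:ℝ)..L, (DΨr x * Ψq x + ηq x * Ψq x) := by
      apply int_congr hL'
      intro x hx
      have := heqq x hx
      linear_combination (-(Ψq x)) * this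
    rw [h0]; exact intervalIntegral.integral_add (integrable_of_contOn hL' (hcDr.mul hCq))
      (integrable_of_contOn hL' (hcq.mul hCq))
  have h4 : (∫ x in (0:ℝ)..L, DΨr x * Ψq x) = -∫ x in (0:ℝ)..L, Ψr x * DΨq x :=
    ibp hL' hdr hdq hcDr hcDq hpr hpq
  have h5 : (∫ x in (0:ℝ)..L, Ψr x * DΨq x)
      = (∫ x in (0:ℝ)..L, Ψr x * Ψp x) - ∫ x in (0:ℝ)..L, ηr x * Ψr x := by
    have h0 : (∫ x in (0:ℝ)..L, Ψr x * DΨq x)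
        = ∫ x in (0:ℝ)..L, (Ψr x * Ψp x - ηr x * Ψr x) := by
      apply int_congr hL'
      intro x hx
      have := heqr x hx
      linear_combination Ψr x * this
    rw [h0]; exact intervalIntegral.integral_sub (integrable_of_contOn hL' (hCr.mul hCp))
      (integrable_of_contOn hL' (hcr.mul hCr))
  have h6 : (∫ x in (0:ℝ)..L, Ψr x * Ψp x)
      = (∫ x in (0:ℝ)..L, DΨp x * Ψp x) - ∫ x in (0:ℝ)..L, ηp x * Ψp x := by
    have h0 : (∫ x in (0:ℝ)..L, Ψr x * Ψp x)
        = ∫ x in (0:ℝ)..L, (DΨp x * Ψp x - ηp x * Ψp x) := by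
      apply int_congr hL'
      intro x hx
      have := heqp x hx
      linear_combination (-(Ψp x)) * this
    rw [h0]; exact intervalIntegral.integral_sub (integrable_of_contOn hL' (hcDp.mul hCp))
      (integrable_of_contOn hL' (hcp.mul hCp))
  have h7 : (∫ x in (0:ℝ)..L, DΨp x * Ψp x) = 0 := by
    have ha := ibp hL' hdp hdp hcDp hcDp hpp hpp
    have hb2 : (∫ x in (0:ℝ)..L, Ψp x * DΨp x) = ∫ x in (0:ℝ)..L, DΨp x * Ψp x :=
      int_congr hL' (fun x _ => mul_comm _ _)
    rw [hb2] at ha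
    linarith
  have hA : (∫ x in (0:ℝ)..L, DΨs x * Ψu x)
      = -((∫ x in (0:ℝ)..L, ηp x * Ψp x) + (∫ x in (0:ℝ)..L, ηq x * Ψq x)
        + (∫ x in (0:ℝ)..L, ηr x * Ψr x) + (∫ x in (0:ℝ)..L, ηs x * Ψs x)) := by
    linarith
  have energy_id : γ * (∫ x in (0:ℝ)..L, Ψu x ^ 2)
      = (∫ x in (0:ℝ)..L, ηu x * Ψu x)
        + β * ((∫ x in (0:ℝ)..L, ηp x * Ψp x) + (∫ x in (0:ℝ)..L, ηq x * Ψq x)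
        + (∫ x in (0:ℝ)..L, ηr x * Ψr x) + (∫ x in (0:ℝ)..L, ηs x * Ψs x)) := by
    linear_combination heq5int - β * hA
  -- energy bound
  have hcsu : |∫ x in (0:ℝ)..L, ηu x * Ψu x| ≤ N L ηu * N L Ψu := cs hL' hcu hCu
  have hcsp : |∫ x in (0:ℝ)..L, ηp x * Ψp x| ≤ N L ηp * N L Ψp := cs hL' hcp hCp
  have hcsq : |∫ x in (0:ℝ)..L, ηq x * Ψq x| ≤ N L ηq * N L Ψq := cs hL' hcq hCq
  have hcsr : |∫ x in (0:ℝ)..L, ηr x * Ψr x| ≤ N L ηr * N L Ψr := cs hL' hcr hCr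
  have hcss : |∫ x in (0:ℝ)..L, ηs x * Ψs x| ≤ N L ηs * N L Ψs := cs hL' hcs2 hCs
  have henergy : γ * (N L Ψu) ^ 2 ≤ N L ηu * N L Ψu
      + |β| * (N L ηp * N L Ψp + N L ηq * N L Ψq + N L ηr * N L Ψr + N L ηs * N L Ψs) := by
    have hXsq : (N L Ψu) ^ 2 = ∫ x in (0:ℝ)..L, Ψu x ^ 2 := N_sq hL' Ψu
    rw [hXsq, energy_id]
    have hbs : β * ((∫ x in (0:ℝ)..L, ηp x * Ψp x) + (∫ x in (0:ℝ)..L, ηq x * Ψq x)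
        + (∫ x in (0:ℝ)..L, ηr x * Ψr x) + (∫ x in (0:ℝ)..L, ηs x * Ψs x))
        ≤ |β| * (N L ηp * N L Ψp + N L ηq * N L Ψq + N L ηr * N L Ψr + N L ηs * N L Ψs) := by
      calc β * ((∫ x in (0:ℝ)..L, ηp x * Ψp x) + (∫ x in (0:ℝ)..L, ηq x * Ψq x)
            + (∫ x in (0:ℝ)..L, ηr x * Ψr x) + (∫ x in (0:ℝ)..L, ηs x * Ψs x))
          ≤ |β * ((∫ x in (0:ℝ)..L, ηp x * Ψp x) + (∫ x in (0:ℝ)..L, ηq x * Ψq x)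
            + (∫ x in (0:ℝ)..L, ηr x * Ψr x) + (∫ x in (0:ℝ)..L, ηs x * Ψs x))| := le_abs_self _
        _ = |β| * |(∫ x in (0:ℝ)..L, ηp x * Ψp x) + (∫ x in (0:ℝ)..L, ηq x * Ψq x)
            + (∫ x in (0:ℝ)..L, ηr x * Ψr x) + (∫ x in (0:ℝ)..L, ηs x * Ψs x)| := abs_mul _ _
        _ ≤ |β| * (N L ηp * N L Ψp + N L ηq * N L Ψq + N L ηr * N L Ψr + N L ηs * N L Ψs) := by
            apply mul_le_mul_of_nonneg_left _ (abs_nonneg β)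
            calc |(∫ x in (0:ℝ)..L, ηp x * Ψp x) + (∫ x in (0:ℝ)..L, ηq x * Ψq x)
                + (∫ x in (0:ℝ)..L, ηr x * Ψr x) + (∫ x in (0:ℝ)..L, ηs x * Ψs x)|
                ≤ |(∫ x in (0:ℝ)..L, ηp x * Ψp x)| + |(∫ x in (0:ℝ)..L, ηq x * Ψq x)|
                + |(∫ x in (0:ℝ)..L, ηr x * Ψr x)| + |(∫ x in (0:ℝ)..L, ηs x * Ψs x)| := by
                  have t3 := abs_add_three (∫ x in (0:ℝ)..L, ηp x * Ψp x)
                    (∫ x in (0:ℝ)..L, ηq x * Ψq x) (∫ x in (0:ℝ)..L, ηr x * Ψr x)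
                  have t4 := abs_add_le ((∫ x in (0:ℝ)..L, ηp x * Ψp x)
                    + (∫ x in (0:ℝ)..L, ηq x * Ψq x) + (∫ x in (0:ℝ)..L, ηr x * Ψr x))
                    (∫ x in (0:ℝ)..L, ηs x * Ψs x)
                  linarith
              _ ≤ _ := by linarith
    have h8 : (∫ x in (0:ℝ)..L, ηu x * Ψu x) ≤ N L ηu * N L Ψu := le_trans (le_abs_self _) hcsu
    linarith
  -- apply the algebraic chain lemma
  exact hmain (N L Ψu) (N L DΨu) (N L Ψq) (N L DΨq) (N L Ψp) (N L DΨp) (N L Ψr) (N L DΨr)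
    (N L Ψs) (N L DΨs) (N L ηu) (N L ηq) (N L ηp) (N L ηr) (N L ηs)
    (N_nonneg L _) (N_nonneg L _) (N_nonneg L _) (N_nonneg L _) (N_nonneg L _)
    (N_nonneg L _) (N_nonneg L _) (N_nonneg L _) (N_nonneg L _) (N_nonneg L _)
    (N_nonneg L _) (N_nonneg L _) (N_nonneg L _) (N_nonneg L _) (N_nonneg L _)
    hNDs hNs hNDr hNr hNDp hNp hNDq hNq hNDu henergy
end
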